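/- Every countable group G that is abelian-by-finite or locally finite-by-abelian, endowed with a proper left-invariant metric, is bijectively coarsely equivalent to some countable abelian group endowed with a proper left-invariant metric. -/

import Mathlib

/-- A group is abelian-by-finite: it has an abelian normal subgroup with finite quotient. -/
def AbelianByFinite (G : Type*) [Group G] : Prop :=
  ∃ N : Subgroup G, N.Normal ∧ (∀ a b : G, a ∈ N → b ∈ N → a * b = b * a) ∧ Finite (G ⧸ N)

/-- A group is finite-by-abelian: it has a finite normal subgroup with abelian quotient. -/
def FiniteByAbelian (G : Type*) [Group G] : Prop :=
  ∃ N : Subgroup G, N.Normal ∧ Finite N ∧ ∀ a b : G, a * b * a⁻¹ * b⁻¹ ∈ N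

/-- A group is locally finite-by-abelian: every finitely generated subgroup is
finite-by-abelian. -/
def LocallyFiniteByAbelian (G : Type*) [Group G] : Prop :=
  ∀ K : Subgroup G, Group.FG K → FiniteByAbelian K

open Function

noncomputable section BCE

/-! ## Norm infrastructure -/

variable {G : Type} [Group G] [MetricSpace G]

/-- The norm associated to the metric. -/
def nu (x : G) : ℝ := dist 1 x

lemma nu_nonneg (x : G) : 0 ≤ nu x := dist_nonneg

lemma nu_one : nu (1 : G) = 0 := dist_self 1

lemma nu_eq_zero {x : G} : nu x = 0 ↔ x = 1 := by
  rw [nu, dist_eq_zero, eq_comm]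

section WithInv
variable (hinv : ∀ g x y : G, dist (g * x) (g * y) = dist x y)

include hinv

lemma dist_eq_nu (x y : G) : dist x y = nu (x⁻¹ * y) := by
  have h := hinv x⁻¹ x y
  rw [inv_mul_cancel] at h
  rw [nu, h]

lemma nu_inv (x : G) : nu x⁻¹ = nu x := by
  have h := hinv x 1 x⁻¹
  rw [mul_one, mul_inv_cancel] at h
  rw [nu, ← h, dist_comm]; rfl

lemma nu_mul (x y : G) : nu (x * y) ≤ nu x + nu y := by
  have h := hinv x 1 y
  rw [mul_one] at h
  calc dist 1 (x * y) ≤ dist 1 x + dist x (x * y) := dist_triangle _ _ _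
  _ = nu x + nu y := by rw [h]; rfl

lemma nu_mul3 (x y z : G) : nu (x * y * z) ≤ nu x + nu y + nu z := by
  calc nu (x * y * z) ≤ nu (x * y) + nu z := nu_mul hinv _ _
  _ ≤ nu x + nu y + nu z := by linarith [nu_mul hinv x y]

end WithInv

/-- A bound for the norm over a finite set. -/
lemma nu_bound_of_finite {S : Set G} (hS : S.Finite) :
    ∃ C : ℝ, 0 ≤ C ∧ ∀ z ∈ S, nu z ≤ C := by
  obtain ⟨C, hC⟩ := (hS.image nu).bddAbove
  refine ⟨max C 0, le_max_right _ _, fun z hz => ?_⟩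
  exact le_trans (hC (Set.mem_image_of_mem nu hz)) (le_max_left _ _)

/-- An equivalence between `Fin m` and `ZMod m`. -/
def finZModEquiv (m : ℕ) [NeZero m] : Fin m ≃ ZMod m where
  toFun i := (i.1 : ZMod m)
  invFun q := ⟨q.val, ZMod.val_lt q⟩
  left_inv i := by ext; simp [ZMod.val_cast_of_lt i.2]
  right_inv q := by simp [ZMod.natCast_rightInverse q]

/-! ## The abelian-by-finite case -/

section CaseABF

variable [Countable G]
variable (hinv : ∀ g x y : G, dist (g * x) (g * y) = dist x y)
variable (hprop : ∀ (x : G) (r : ℝ), {y : G | dist x y ≤ r}.Finite)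

include hinv hprop in
theorem case_abelianByFinite
    (hG : ∃ N : Subgroup G, N.Normal ∧ (∀ a b : G, a ∈ N → b ∈ N → a * b = b * a) ∧
      Finite (G ⧸ N)) :
    ∃ (A : Type) (_ : CommGroup A) (_ : MetricSpace A), Countable A ∧
      (∀ g x y : A, dist (g * x) (g * y) = dist x y) ∧
      (∀ (x : A) (r : ℝ), {y : A | dist x y ≤ r}.Finite) ∧
      ∃ F : G → A, Function.Bijective F ∧
        (∀ δ : ℝ, 0 ≤ δ → ∃ ε : ℝ, 0 ≤ ε ∧
          ∀ x y : G, dist x y ≤ δ → dist (F x) (F y) ≤ ε) ∧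
        (∀ δ : ℝ, 0 ≤ δ → ∃ ε : ℝ, 0 ≤ ε ∧
          ∀ x y : G, dist (F x) (F y) ≤ δ → dist x y ≤ ε) := by
  classical
  obtain ⟨N, hNorm, hComm, hFin⟩ := hG
  -- the transversal
  set t : G ⧸ N → G := Quotient.out with ht
  have htq : ∀ q : G ⧸ N, (QuotientGroup.mk (t q) : G ⧸ N) = q := fun q =>
    QuotientGroup.out_eq' q
  -- bound on transversal norms
  obtain ⟨C, hC0, hC⟩ : ∃ C : ℝ, 0 ≤ C ∧ ∀ q : G ⧸ N, nu (t q) ≤ C := by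
    obtain ⟨C, hC0, hC⟩ := nu_bound_of_finite (Set.finite_range t)
    exact ⟨C, hC0, fun q => hC _ (Set.mem_range_self q)⟩
  -- membership facts
  have hmem : ∀ x : G, x * (t (QuotientGroup.mk x))⁻¹ ∈ N := by
    intro x
    have h1 : (t (QuotientGroup.mk x))⁻¹ * x ∈ N := by
      rw [← QuotientGroup.eq]
      exact (htq _).symm ▸ rfl
    have := hNorm.conj_mem _ h1 (t (QuotientGroup.mk x))
    simpa [mul_assoc] using this
  -- commutative group structure on N
  letI : CommGroup ↥N :=
    { (inferInstance : Group ↥N) with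
      mul_comm := fun a b => Subtype.ext (hComm a b a.2 b.2) }
  -- cardinality of quotient
  set m := Nat.card (G ⧸ N) with hm
  haveI : NeZero m := ⟨Nat.pos_iff_ne_zero.mp Nat.card_pos⟩
  let ι : (G ⧸ N) ≃ ZMod m := (Finite.equivFinOfCardEq rfl).trans (finZModEquiv m)
  -- the abelian group
  set A := ↥N × Multiplicative (ZMod m) with hA
  -- the metric
  let dA : A → A → ℝ := fun p q => dist (p.1 : G) (q.1 : G) + (if p.2 = q.2 then 0 else 1)
  have dA_self : ∀ p : A, dA p p = 0 := fun p => by simp [dA]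
  have dA_comm : ∀ p q : A, dA p q = dA q p := fun p q => by
    simp only [dA, dist_comm, eq_comm]
  have dA_tri : ∀ p q r : A, dA p r ≤ dA p q + dA q r := by
    intro p q r
    have h1 : dist (p.1 : G) (r.1 : G) ≤ dist (p.1 : G) (q.1 : G) + dist (q.1 : G) (r.1 : G) :=
      dist_triangle _ _ _
    have h2 : (if p.2 = r.2 then (0:ℝ) else 1) ≤
        (if p.2 = q.2 then (0:ℝ) else 1) + (if q.2 = r.2 then (0:ℝ) else 1) := by
      by_cases hpr : p.2 = r.2
      · rw [if_pos hpr]; split_ifs <;> norm_num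
      · rw [if_neg hpr]
        by_cases hpq : p.2 = q.2
        · rw [if_pos hpq, if_neg (fun h => hpr (hpq.trans h))]; norm_num
        · rw [if_neg hpq]; split_ifs <;> norm_num
    simp only [dA]; linarith
  have dA_eq : ∀ p q : A, dA p q = 0 → p = q := by
    intro p q h
    have h1 : (0:ℝ) ≤ dist (p.1 : G) (q.1 : G) := dist_nonneg
    have h2 : (0:ℝ) ≤ (if p.2 = q.2 then (0:ℝ) else 1) := by positivity
    have h3 : dist (p.1 : G) (q.1 : G) = 0 := by simp only [dA] at h; linarith
    have h4 : (if p.2 = q.2 then (0:ℝ) else 1) = 0 := by simp only [dA] at h; linarith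
    have h5 : p.2 = q.2 := by by_contra hne; simp [hne] at h4
    have h6 : p.1 = q.1 := Subtype.ext (dist_eq_zero.mp h3)
    exact Prod.ext h6 h5
  let MS : MetricSpace A :=
    { dist := dA
      dist_self := dA_self
      dist_comm := dA_comm
      dist_triangle := dA_tri
      eq_of_dist_eq_zero := fun {p q} h => dA_eq p q h }
  -- the bijection
  have hmem2 : ∀ (a : ↥N) (q : G ⧸ N), (QuotientGroup.mk ((a : G) * t q) : G ⧸ N) = q := by
    intro a q
    have : (QuotientGroup.mk ((a:G) * t q) : G ⧸ N) = QuotientGroup.mk (t q) := by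
      rw [QuotientGroup.eq]
      have : ((a:G) * t q)⁻¹ * t q = (t q)⁻¹ * (a:G)⁻¹ * t q := by group
      rw [this]
      have := hNorm.conj_mem _ (N.inv_mem a.2) (t q)⁻¹
      simpa [mul_assoc] using this
    rw [this, htq]
  let F : G → A := fun x =>
    (⟨x * (t (QuotientGroup.mk x))⁻¹, hmem x⟩, Multiplicative.ofAdd (ι (QuotientGroup.mk x)))
  let Finv : A → G := fun p => (p.1 : G) * t (ι.symm (Multiplicative.toAdd p.2))
  have hFbij : Function.Bijective F := by
    have hli : Function.LeftInverse Finv F := by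
      intro x
      simp only [F, Finv, toAdd_ofAdd, Equiv.symm_apply_apply]
      group
    have hri : Function.RightInverse Finv F := by
      intro p
      simp only [F, Finv]
      have hq : (QuotientGroup.mk ((p.1 : G) * t (ι.symm (Multiplicative.toAdd p.2))) : G ⧸ N)
          = ι.symm (Multiplicative.toAdd p.2) := hmem2 _ _
      refine Prod.ext ?_ ?_
      · apply Subtype.ext
        simp only [hq]
        group
      · simp only [hq, Equiv.apply_symm_apply]
        rfl
    exact ⟨hli.injective, hri.surjective⟩
  -- distance formula
  have hdform : ∀ x y : G,
      dist ((F x).1 : G) ((F y).1 : G)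
        = nu ((t (QuotientGroup.mk x)) * (x⁻¹ * y) * (t (QuotientGroup.mk y))⁻¹) := by
    intro x y
    rw [dist_eq_nu hinv]
    congr 1
    simp only [F]
    group
  refine ⟨A, inferInstance, MS, inferInstance, ?_, ?_, F, hFbij, ?_, ?_⟩
  · -- invariance
    intro g x y
    show dA (g * x) (g * y) = dA x y
    simp only [dA]
    have h1 : ((g * x).1 : G) = (g.1 : G) * (x.1 : G) := rfl
    have h2 : ((g * y).1 : G) = (g.1 : G) * (y.1 : G) := rfl
    rw [h1, h2, hinv]
    congr 1
    by_cases h : x.2 = y.2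
    · have h' : (g * x).2 = (g * y).2 := by
        show g.2 * x.2 = g.2 * y.2
        rw [h]
      simp [h, h']
    · have h' : ¬((g * x).2 = (g * y).2) := fun hc => h (mul_left_cancel hc)
      simp [h, h']
  · -- properness
    intro p r
    have hsub : {q : A | dA p q ≤ r} ⊆
        (fun z : G × Multiplicative (ZMod m) =>
          (if hz : z.1 ∈ N then ((⟨z.1, hz⟩ : ↥N), z.2) else p)) ''
          ({z : G | dist (p.1 : G) z ≤ r} ×ˢ (Set.univ : Set (Multiplicative (ZMod m)))) := by
      intro q hq
      have h1 : dist (p.1 : G) (q.1 : G) ≤ r := by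
        have h2 : (0:ℝ) ≤ (if p.2 = q.2 then (0:ℝ) else 1) := by positivity
        simp only [Set.mem_setOf_eq, dA] at hq
        linarith
      refine ⟨((q.1 : G), q.2), ⟨h1, Set.mem_univ _⟩, ?_⟩
      simp [q.1.2]
    exact Set.Finite.subset (Set.Finite.image _ (Set.Finite.prod (hprop _ r)
      (Set.finite_univ))) hsub
  · -- forward estimate
    intro δ hδ
    refine ⟨δ + 2 * C + 1, by linarith, ?_⟩
    intro x y hxy
    show dA (F x) (F y) ≤ δ + 2 * C + 1
    have h1 : nu (x⁻¹ * y) ≤ δ := by rw [← dist_eq_nu hinv]; exact hxy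
    have h2 : dist ((F x).1 : G) ((F y).1 : G) ≤ C + δ + C := by
      rw [hdform x y]
      calc nu ((t (QuotientGroup.mk x)) * (x⁻¹ * y) * (t (QuotientGroup.mk y))⁻¹)
          ≤ nu (t (QuotientGroup.mk x)) + nu (x⁻¹ * y) + nu (t (QuotientGroup.mk y))⁻¹ :=
            nu_mul3 hinv _ _ _
        _ ≤ C + δ + C := by
            have := hC (QuotientGroup.mk x)
            have h4 := hC (QuotientGroup.mk y)
            rw [nu_inv hinv]
            gcongr
    have h3 : (if (F x).2 = (F y).2 then (0:ℝ) else 1) ≤ 1 := by split_ifs <;> norm_num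
    simp only [dA]
    linarith
  · -- backward estimate
    intro δ hδ
    refine ⟨C + δ + C, by linarith, ?_⟩
    intro x y hxy
    replace hxy : dA (F x) (F y) ≤ δ := hxy
    have h2 : (0:ℝ) ≤ (if (F x).2 = (F y).2 then (0:ℝ) else 1) := by positivity
    have h1 : dist ((F x).1 : G) ((F y).1 : G) ≤ δ := by
      simp only [dA] at hxy; linarith
    rw [hdform x y] at h1
    have key : x⁻¹ * y = (t (QuotientGroup.mk x))⁻¹ *
        ((t (QuotientGroup.mk x)) * (x⁻¹ * y) * (t (QuotientGroup.mk y))⁻¹) *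
        (t (QuotientGroup.mk y)) := by group
    rw [dist_eq_nu hinv, key]
    calc nu _ ≤ nu (t (QuotientGroup.mk x))⁻¹ +
        nu ((t (QuotientGroup.mk x)) * (x⁻¹ * y) * (t (QuotientGroup.mk y))⁻¹) +
        nu (t (QuotientGroup.mk y)) := nu_mul3 hinv _ _ _
      _ ≤ C + δ + C := by
          have := hC (QuotientGroup.mk x)
          have h4 := hC (QuotientGroup.mk y)
          rw [nu_inv hinv]
          gcongr

end CaseABF


open scoped Classical DirectSum

variable {G : Type} [Group G]

/-- Context data for the locally finite-by-abelian case. -/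
structure Ctx (G : Type) [Group G] : Type where
  e : ℕ → G
  hesurj : Function.Surjective e
  M : ℕ → Subgroup G
  Phi : ℕ → Subgroup G
  hM0 : M 0 = ⊥
  hMle : ∀ n, M n ≤ M (n + 1)
  hgmem : ∀ n, e n ∈ M (n + 1)
  hMgen : ∀ n, M (n + 1) ≤ M n ⊔ Subgroup.closure {e n}
  hMexh : ∀ x : G, ∃ n, x ∈ M n
  hPhiFin : ∀ n, (Phi n : Set G).Finite
  hPhiLe : ∀ n, Phi n ≤ M (n + 1)
  hPhiConj : ∀ n, ∀ x ∈ M (n + 1), ∀ w ∈ Phi n, x * w * x⁻¹ ∈ Phi n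
  hPhiComm : ∀ n, ∀ a ∈ M (n + 1), ∀ b ∈ M (n + 1), a * b * a⁻¹ * b⁻¹ ∈ Phi n
  hFC : ∀ (h : G) (n : ℕ), ∃ S : Set G, S.Finite ∧ ∀ x ∈ M n, x * h * x⁻¹ * h⁻¹ ∈ S

namespace Ctx

lemma hMmono (c : Ctx G) : Monotone c.M :=
  monotone_nat_of_le_succ c.hMle

/-- extraction of finite-by-abelian data for a f.g. subgroup -/
lemma phi_package (hLFA : LocallyFiniteByAbelian G) (K : Subgroup G) (hK : K.FG) :
    ∃ Φ : Subgroup G, (Φ : Set G).Finite ∧ Φ ≤ K ∧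
      (∀ x ∈ K, ∀ w ∈ Φ, x * w * x⁻¹ ∈ Φ) ∧
      (∀ a ∈ K, ∀ b ∈ K, a * b * a⁻¹ * b⁻¹ ∈ Φ) := by
  obtain ⟨N, hN, hNfin, hNcomm⟩ := hLFA K ((Group.fg_iff_subgroup_fg K).mpr hK)
  refine ⟨N.map K.subtype, ?_, ?_, ?_, ?_⟩
  · haveI := hNfin
    exact Set.Finite.image _ (Set.toFinite _)
  · rintro x ⟨y, _, rfl⟩; exact y.2
  · rintro x hx w ⟨y, hy, rfl⟩
    refine ⟨(⟨x, hx⟩ : K) * y * (⟨x, hx⟩ : K)⁻¹, hN.conj_mem y hy _, rfl⟩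
  · intro a ha b hb
    exact ⟨(⟨a, ha⟩ : K) * ⟨b, hb⟩ * (⟨a, ha⟩ : K)⁻¹ * (⟨b, hb⟩ : K)⁻¹,
      hNcomm _ _, rfl⟩

lemma exists_ctx [Countable G] (hLFA : LocallyFiniteByAbelian G) : Nonempty (Ctx G) := by
  classical
  obtain ⟨e, he⟩ := exists_surjective_nat G
  -- finite generating sets
  let Fse : ℕ → Finset G := fun n => Nat.rec ∅ (fun k S => insert (e k) S) n
  let M : ℕ → Subgroup G := fun n => Subgroup.closure (SetLike.coe (Fse n))
  have hM0 : M 0 = ⊥ := by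
    show Subgroup.closure _ = ⊥
    rw [show Fse 0 = (∅ : Finset G) from rfl]
    simp [Subgroup.closure_empty]
  have hFse : ∀ n, Fse (n + 1) = insert (e n) (Fse n) := fun n => rfl
  have hMle : ∀ n, M n ≤ M (n + 1) := by
    intro n
    apply Subgroup.closure_mono
    rw [hFse]
    exact fun x hx => Finset.mem_insert_of_mem hx
  have hgmem : ∀ n, e n ∈ M (n + 1) := by
    intro n
    apply Subgroup.subset_closure
    rw [hFse]
    exact Finset.mem_insert_self _ _
  have hMexh : ∀ x : G, ∃ n, x ∈ M n := by
    intro x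
    obtain ⟨n, rfl⟩ := he x
    exact ⟨n + 1, hgmem n⟩
  have hMgen : ∀ n, M (n + 1) ≤ M n ⊔ Subgroup.closure {e n} := by
    intro n
    show Subgroup.closure _ ≤ _
    rw [hFse, Finset.coe_insert, Set.insert_eq, Subgroup.closure_union]
    apply sup_le
    · exact le_sup_right
    · exact le_sup_left
  have hMfg : ∀ n, (M n).FG := fun n => ⟨Fse n, rfl⟩
  -- choose Phi for each level
  have hPhi : ∀ n : ℕ, ∃ Φ : Subgroup G, (Φ : Set G).Finite ∧ Φ ≤ M (n + 1) ∧
      (∀ x ∈ M (n + 1), ∀ w ∈ Φ, x * w * x⁻¹ ∈ Φ) ∧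
      (∀ a ∈ M (n + 1), ∀ b ∈ M (n + 1), a * b * a⁻¹ * b⁻¹ ∈ Φ) :=
    fun n => phi_package hLFA (M (n + 1)) (hMfg (n + 1))
  choose Phi h1 h2 h3 h4 using hPhi
  have hFC : ∀ (h : G) (n : ℕ), ∃ S : Set G, S.Finite ∧ ∀ x ∈ M n, x * h * x⁻¹ * h⁻¹ ∈ S := by
    intro h n
    obtain ⟨K, hKfg, hMK, hhK⟩ : ∃ K : Subgroup G, K.FG ∧ M n ≤ K ∧ h ∈ K := by
      refine ⟨M n ⊔ Subgroup.closure {h}, ?_, le_sup_left, ?_⟩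
      · obtain ⟨S, hS⟩ := hMfg n
        exact ⟨insert h S, by
          rw [show ((insert h S : Finset G) : Set G) = insert h (S : Set G) from Finset.coe_insert h S,
            Set.insert_eq, Subgroup.closure_union, hS, sup_comm]⟩
      · exact le_sup_right (α := Subgroup G) (Subgroup.subset_closure rfl)
    obtain ⟨Φ, hfin, _, _, hcomm⟩ := phi_package hLFA K hKfg
    exact ⟨Φ, hfin, fun x hx => hcomm x (hMK hx) h hhK⟩
  exact ⟨⟨e, he, M, Phi, hM0, hMle, hgmem, hMgen, hMexh, h1, h2, h3, h4, hFC⟩⟩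

/-! ### The subgroup `Pc` and the cyclic layer -/

variable (c : Ctx G) (n : ℕ)

/-- The subgroup generated by `M n` and `Phi n`. -/
def Pc : Subgroup G where
  carrier := {x | ∃ t ∈ c.Phi n, ∃ m ∈ c.M n, x = t * m}
  one_mem' := ⟨1, one_mem _, 1, one_mem _, (one_mul 1).symm⟩
  mul_mem' := by
    rintro a b ⟨t, ht, m, hm, rfl⟩ ⟨t', ht', m', hm', rfl⟩
    refine ⟨t * (m * t' * m⁻¹),
      mul_mem ht (c.hPhiConj n m (c.hMle n hm) t' ht'), m * m', mul_mem hm hm', by group⟩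
  inv_mem' := by
    rintro a ⟨t, ht, m, hm, rfl⟩
    refine ⟨m⁻¹ * t⁻¹ * m, ?_, m⁻¹, inv_mem hm, by group⟩
    have := c.hPhiConj n m⁻¹ (inv_mem (c.hMle n hm)) t⁻¹ (inv_mem ht)
    simpa using this

lemma M_le_Pc : c.M n ≤ c.Pc n := fun m hm => ⟨1, one_mem _, m, hm, (one_mul m).symm⟩

lemma Phi_le_Pc : c.Phi n ≤ c.Pc n := fun t ht => ⟨t, ht, 1, one_mem _, (mul_one t).symm⟩

lemma Pc_le : c.Pc n ≤ c.M (n + 1) := by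
  rintro x ⟨t, ht, m, hm, rfl⟩
  exact mul_mem (c.hPhiLe n ht) (c.hMle n hm)

lemma Pc_conj {x p : G} (hx : x ∈ c.M (n + 1)) (hp : p ∈ c.Pc n) :
    x * p * x⁻¹ ∈ c.Pc n := by
  obtain ⟨t, ht, m, hm, rfl⟩ := hp
  have h1 : x * t * x⁻¹ ∈ c.Phi n := c.hPhiConj n x hx t ht
  have h2 : x * m * x⁻¹ * m⁻¹ ∈ c.Phi n :=
    c.hPhiComm n x hx m (c.hMle n hm)
  have : x * (t * m) * x⁻¹ = (x * t * x⁻¹) * ((x * m * x⁻¹ * m⁻¹) * m) := by group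
  rw [this]
  exact mul_mem ((c.Phi_le_Pc n) h1) (mul_mem ((c.Phi_le_Pc n) h2) ((c.M_le_Pc n) hm))

lemma epow_mem (k : ℤ) : c.e n ^ k ∈ c.M (n + 1) := zpow_mem (c.hgmem n) k

/-- The cyclic layer order. -/
lemma exists_cyc : ∃ cn : ℕ, ∀ k : ℤ, c.e n ^ k ∈ c.Pc n ↔ (cn : ℤ) ∣ k := by
  let H : AddSubgroup ℤ :=
    { carrier := {k | c.e n ^ k ∈ c.Pc n}
      zero_mem' := by simp only [Set.mem_setOf_eq, zpow_zero]; exact one_mem _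
      add_mem' := by
        intro a b ha hb
        simp only [Set.mem_setOf_eq, zpow_add] at *
        exact mul_mem ha hb
      neg_mem' := by
        intro a ha
        simp only [Set.mem_setOf_eq, zpow_neg] at *
        exact inv_mem ha }
  obtain ⟨a, ha⟩ := Int.subgroup_cyclic H
  refine ⟨a.natAbs, fun k => ?_⟩
  have h1 : c.e n ^ k ∈ c.Pc n ↔ k ∈ H := Iff.rfl
  rw [h1, ha, AddSubgroup.mem_closure_singleton]
  rw [show ((a.natAbs : ℤ) ∣ k) = (a ∣ k) from propext (Int.natAbs_dvd)]
  constructor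
  · rintro ⟨m, rfl⟩
    exact dvd_mul_left a m
  · rintro ⟨q, rfl⟩
    exact ⟨q, by rw [smul_eq_mul, mul_comm]⟩

/-- The order of the cyclic layer. -/
def cyc : ℕ := (c.exists_cyc n).choose

lemma cyc_spec (k : ℤ) : c.e n ^ k ∈ c.Pc n ↔ ((c.cyc n : ℤ)) ∣ k :=
  (c.exists_cyc n).choose_spec k

/-- Every element of `M (n+1)` lies in some coset `(e n)^k * Pc`. -/
lemma exists_exponent {x : G} (hx : x ∈ c.M (n + 1)) :
    ∃ k : ℤ, (c.e n ^ k)⁻¹ * x ∈ c.Pc n := by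
  let U : Subgroup G :=
    { carrier := {x | ∃ k : ℤ, (c.e n ^ k)⁻¹ * x ∈ c.Pc n}
      one_mem' := ⟨0, by simpa using one_mem (c.Pc n)⟩
      mul_mem' := by
        rintro a b ⟨k, hk⟩ ⟨l, hl⟩
        refine ⟨k + l, ?_⟩
        have key : (c.e n ^ (k + l))⁻¹ * (a * b)
            = ((c.e n ^ l)⁻¹ * ((c.e n ^ k)⁻¹ * a) * (c.e n ^ l)) * ((c.e n ^ l)⁻¹ * b) := by
          rw [zpow_add]; group
        rw [key]
        exact mul_mem (by
          have := c.Pc_conj n (x := (c.e n ^ l)⁻¹) (inv_mem (c.epow_mem n l)) hk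
          simpa using this) hl
      inv_mem' := by
        rintro a ⟨k, hk⟩
        refine ⟨-k, ?_⟩
        have h2 : ((c.e n ^ k)⁻¹ * a)⁻¹ ∈ c.Pc n := inv_mem hk
        have key : (c.e n ^ (-k))⁻¹ * a⁻¹
            = (c.e n ^ k) * (((c.e n ^ k)⁻¹ * a)⁻¹) * (c.e n ^ k)⁻¹ := by
          rw [zpow_neg]; group
        rw [key]
        exact c.Pc_conj n (c.epow_mem n k) h2 }
  have hle : c.M (n + 1) ≤ U := by
    refine le_trans (c.hMgen n) (sup_le ?_ ?_)
    · intro m hm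
      exact ⟨0, by simpa using (c.M_le_Pc n hm)⟩
    · rw [Subgroup.closure_le]
      rintro y rfl
      exact ⟨1, by simpa using one_mem (c.Pc n)⟩
  exact hle hx

/-- Canonical range predicate for exponents. -/
def Canon (k : ℤ) : Prop := c.cyc n = 0 ∨ (0 ≤ k ∧ k < c.cyc n)

lemma exists_kcan {x : G} (hx : x ∈ c.M (n + 1)) :
    ∃ k : ℤ, ((c.e n ^ k)⁻¹ * x ∈ c.Pc n) ∧ c.Canon n k := by
  obtain ⟨k, hk⟩ := c.exists_exponent n hx
  rcases Nat.eq_zero_or_pos (c.cyc n) with h0 | hpos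
  · exact ⟨k, hk, Or.inl h0⟩
  · have hcne : ((c.cyc n : ℤ)) ≠ 0 := Int.natCast_ne_zero.mpr (Nat.pos_iff_ne_zero.mp hpos)
    refine ⟨k % (c.cyc n : ℤ), ?_, Or.inr ⟨Int.emod_nonneg k hcne, Int.emod_lt_of_pos k
      (Int.natCast_pos.mpr hpos)⟩⟩
    have hdvd : ((c.cyc n : ℤ)) ∣ (k - k % (c.cyc n : ℤ)) := Int.dvd_self_sub_of_emod_eq rfl
    have hmem : c.e n ^ (k - k % (c.cyc n : ℤ)) ∈ c.Pc n := (c.cyc_spec n _).mpr hdvd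
    have key : (c.e n ^ (k % (c.cyc n : ℤ)))⁻¹ * x
        = (c.e n ^ (k - k % (c.cyc n : ℤ))) * ((c.e n ^ k)⁻¹ * x) := by
      rw [show k - k % (c.cyc n : ℤ) = k + -(k % (c.cyc n : ℤ)) by ring, zpow_add, zpow_neg]
      group
    rw [key]
    exact mul_mem hmem hk

lemma kcan_unique {a b : ℤ} (hab : ((c.cyc n : ℤ)) ∣ (a - b))
    (ha : c.Canon n a) (hb : c.Canon n b) : a = b := by
  rcases ha with h0 | ⟨ha1, ha2⟩
  · rw [h0] at hab
    have : a - b = 0 := by exact_mod_cast zero_dvd_iff.mp (by exact_mod_cast hab)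
    omega
  · rcases hb with h0 | ⟨hb1, hb2⟩
    · rw [h0] at ha2
      norm_num at ha2
      omega
    · obtain ⟨q, hq⟩ := hab
      have hc : (0:ℤ) < (c.cyc n : ℤ) := lt_of_le_of_lt ha1 ha2
      have hq0 : q = 0 := by
        by_contra hq0
        rcases lt_or_gt_of_ne hq0 with h | h
        · have : (c.cyc n : ℤ) * q ≤ (c.cyc n : ℤ) * (-1) :=
            mul_le_mul_of_nonneg_left (by omega) (le_of_lt hc)
          linarith
        · have : (c.cyc n : ℤ) * 1 ≤ (c.cyc n : ℤ) * q :=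
            mul_le_mul_of_nonneg_left (by omega) (le_of_lt hc)
          linarith
      rw [hq0] at hq
      simp at hq
      omega

/-- exponents for the same element are congruent -/
lemma exponent_congr {x : G} {a b : ℤ} (ha : (c.e n ^ a)⁻¹ * x ∈ c.Pc n)
    (hb : (c.e n ^ b)⁻¹ * x ∈ c.Pc n) : ((c.cyc n : ℤ)) ∣ (b - a) := by
  rw [← c.cyc_spec n]
  have key : c.e n ^ (b - a) = ((c.e n ^ a)⁻¹ * x) * ((c.e n ^ b)⁻¹ * x)⁻¹ := by
    rw [zpow_sub]
    group
  rw [key]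
  exact mul_mem ha (inv_mem hb)

/-! ### canonical exponent, remainder and digits -/

/-- The canonical exponent of `x` at level `n`. -/
def kzer (x : G) : ℤ :=
  if hx : x ∈ c.M (n + 1) then (c.exists_kcan n hx).choose else 0

lemma kzer_spec {x : G} (hx : x ∈ c.M (n + 1)) :
    ((c.e n ^ c.kzer n x)⁻¹ * x ∈ c.Pc n) ∧ c.Canon n (c.kzer n x) := by
  rw [kzer, dif_pos hx]
  exact (c.exists_kcan n hx).choose_spec

lemma kzer_eq {x : G} (hx : x ∈ c.M (n + 1)) {k : ℤ}
    (h1 : (c.e n ^ k)⁻¹ * x ∈ c.Pc n) (h2 : c.Canon n k) : c.kzer n x = k := by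
  obtain ⟨h3, h4⟩ := c.kzer_spec n hx
  exact (c.kcan_unique n (c.exponent_congr n h1 h3) h4 h2).symm ▸ rfl

/-- The `Pc`-part of `x` at level `n`. -/
def ppart (x : G) : G := (c.e n ^ c.kzer n x)⁻¹ * x

lemma ppart_mem {x : G} (hx : x ∈ c.M (n + 1)) : c.ppart n x ∈ c.Pc n :=
  (c.kzer_spec n hx).1

lemma ppart_mem' {x : G} (hx : x ∈ c.M (n + 1)) : c.ppart n x ∈ c.M (n + 1) :=
  c.Pc_le n (c.ppart_mem n hx)

lemma canon_zero : c.Canon n 0 := by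
  rcases Nat.eq_zero_or_pos (c.cyc n) with h | h
  · exact Or.inl h
  · exact Or.inr ⟨le_refl 0, by exact_mod_cast h⟩

lemma kzer_of_mem_Pc {x : G} (hx : x ∈ c.Pc n) : c.kzer n x = 0 := by
  refine c.kzer_eq n (c.Pc_le n hx) (by simpa using hx) (c.canon_zero n)

lemma ppart_of_mem_Pc {x : G} (hx : x ∈ c.Pc n) : c.ppart n x = x := by
  rw [ppart, c.kzer_of_mem_Pc n hx]
  simp

/-- The cyclic digit of `x` at level `n`. -/
def kap (x : G) : ZMod (c.cyc n) := ((c.kzer n x : ℤ) : ZMod (c.cyc n))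

lemma kap_congr {x : G} (hx : x ∈ c.M (n + 1)) {k : ℤ}
    (h1 : (c.e n ^ k)⁻¹ * x ∈ c.Pc n) : c.kap n x = ((k : ℤ) : ZMod (c.cyc n)) := by
  have h0 := c.exponent_congr n h1 (c.kzer_spec n hx).1
  rw [kap, ZMod.intCast_eq_intCast_iff]
  exact Int.modEq_iff_dvd.mpr (dvd_sub_comm.mp h0)

lemma kap_mul {x y : G} (hx : x ∈ c.M (n + 1)) (hy : y ∈ c.M (n + 1)) :
    c.kap n (x * y) = c.kap n x + c.kap n y := by
  have h1 : (c.e n ^ (c.kzer n x + c.kzer n y))⁻¹ * (x * y) ∈ c.Pc n := by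
    have key : (c.e n ^ (c.kzer n x + c.kzer n y))⁻¹ * (x * y)
        = ((c.e n ^ c.kzer n y)⁻¹ * ((c.e n ^ c.kzer n x)⁻¹ * x) * (c.e n ^ c.kzer n y))
          * ((c.e n ^ c.kzer n y)⁻¹ * y) := by
      rw [zpow_add]; group
    rw [key]
    refine mul_mem ?_ (c.ppart_mem n hy)
    have := c.Pc_conj n (x := (c.e n ^ c.kzer n y)⁻¹) (inv_mem (c.epow_mem n _))
      (c.ppart_mem n hx)
    simpa [ppart] using this
  have h2 := c.kap_congr n (mul_mem hx hy) h1
  rw [h2, Int.cast_add]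
  rfl

lemma kap_of_mem_Pc {x : G} (hx : x ∈ c.Pc n) : c.kap n x = 0 := by
  rw [kap, c.kzer_of_mem_Pc n hx]
  simp

lemma kap_epow (k : ℤ) : c.kap n (c.e n ^ k) = ((k : ℤ) : ZMod (c.cyc n)) := by
  refine c.kap_congr n (c.epow_mem n k) ?_
  simpa using one_mem (c.Pc n)

/-- zero kap means membership in `Pc`. -/
lemma mem_Pc_of_kap_zero {x : G} (hx : x ∈ c.M (n + 1)) (h : c.kap n x = 0) :
    x ∈ c.Pc n := by
  have hdvd : ((c.cyc n : ℤ)) ∣ c.kzer n x := by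
    rwa [kap, ZMod.intCast_zmod_eq_zero_iff_dvd] at h
  have h1 : c.e n ^ (c.kzer n x) ∈ c.Pc n := (c.cyc_spec n _).mpr hdvd
  have key : x = (c.e n ^ (c.kzer n x)) * ((c.e n ^ (c.kzer n x))⁻¹ * x) := by group
  rw [key]
  exact mul_mem h1 (c.ppart_mem n hx)

/-- generic difference: `x⁻¹ * y` exponent relation -/
lemma kap_inv {x : G} (hx : x ∈ c.M (n + 1)) : c.kap n x⁻¹ = - c.kap n x := by
  have := c.kap_mul n hx (inv_mem hx)
  simp only [mul_inv_cancel] at this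
  rw [c.kap_of_mem_Pc n (one_mem _)] at this
  linear_combination -this

/-! ### coset representatives -/

lemma rep_aux (x : G) : ∃ i : ℕ, x⁻¹ * c.e i ∈ c.M n := by
  obtain ⟨i, hi⟩ := c.hesurj x
  exact ⟨i, by rw [hi]; simpa using one_mem (c.M n)⟩

/-- Canonical representative of the left coset `x * M n`. -/
def rep (x : G) : G :=
  if x ∈ c.M n then 1 else c.e (Nat.find (c.rep_aux n x))

lemma rep_spec (x : G) : x⁻¹ * c.rep n x ∈ c.M n := by
  rw [rep]
  split_ifs with h
  · simpa using inv_mem h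
  · exact Nat.find_spec (c.rep_aux n x)

lemma rep_congr {x y : G} (h : x⁻¹ * y ∈ c.M n) : c.rep n x = c.rep n y := by
  have hiff : ∀ i, (x⁻¹ * c.e i ∈ c.M n) ↔ (y⁻¹ * c.e i ∈ c.M n) := by
    intro i
    constructor
    · intro hi
      have : y⁻¹ * c.e i = (x⁻¹ * y)⁻¹ * (x⁻¹ * c.e i) := by group
      rw [this]
      exact mul_mem (inv_mem h) hi
    · intro hi
      have : x⁻¹ * c.e i = (x⁻¹ * y) * (y⁻¹ * c.e i) := by group
      rw [this]
      exact mul_mem h hi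
  have hmem : (x ∈ c.M n) ↔ (y ∈ c.M n) := by
    constructor
    · intro hx
      have : y = x * (x⁻¹ * y) := by group
      rw [this]
      exact mul_mem hx h
    · intro hy
      have : x = y * (x⁻¹ * y)⁻¹ := by group
      rw [this]
      exact mul_mem hy (inv_mem h)
  rw [rep, rep]
  by_cases hx : x ∈ c.M n
  · rw [if_pos hx, if_pos (hmem.mp hx)]
  · rw [if_neg hx, if_neg (fun hy => hx (hmem.mpr hy))]
    apply congrArg c.e
    exact le_antisymm (Nat.find_mono fun i => (hiff i).mpr) (Nat.find_mono fun i => (hiff i).mp)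

lemma rep_of_mem {x : G} (hx : x ∈ c.M n) : c.rep n x = 1 := by
  rw [rep, if_pos hx]

/-- The finite set of representatives appearing at level `n`. -/
def Rset : Finset G := insert 1 ((c.hPhiFin n).toFinset.image (c.rep n))

lemma one_mem_Rset : (1 : G) ∈ c.Rset n := Finset.mem_insert_self 1 _

lemma rep_mem_Rset {x : G} (hx : x ∈ c.Pc n) : c.rep n x ∈ c.Rset n := by
  obtain ⟨t, ht, m, hm, rfl⟩ := hx
  have : c.rep n (t * m) = c.rep n t := by
    refine (c.rep_congr n ?_).symm
    simpa using hm
  rw [this]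
  exact Finset.mem_insert_of_mem (Finset.mem_image_of_mem _ (by simpa using ht))

lemma rep_mem_M1 {x : G} (hx : x ∈ c.Pc n) : c.rep n x ∈ c.M (n + 1) := by
  have h1 := c.rep_spec n x
  have : c.rep n x = x * (x⁻¹ * c.rep n x) := by group
  rw [this]
  exact mul_mem (c.Pc_le n hx) (c.hMle n h1)

/-- The size of the representative set. -/
def scard : ℕ := (c.Rset n).card

instance scard_nezero : NeZero (c.scard n) :=
  ⟨Nat.pos_iff_ne_zero.mp (Finset.card_pos.mpr ⟨1, c.one_mem_Rset n⟩)⟩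

/-- The enumeration of `Rset`, sending `1` to `0`. -/
def renum (t : G) (ht : t ∈ c.Rset n) : Fin (c.scard n) :=
  (Equiv.swap ((c.Rset n).equivFin ⟨1, c.one_mem_Rset n⟩) ⟨0, Nat.pos_of_ne_zero
    (c.scard_nezero n).1⟩) ((c.Rset n).equivFin ⟨t, ht⟩)

lemma renum_one : c.renum n 1 (c.one_mem_Rset n)
    = ⟨0, Nat.pos_of_ne_zero (c.scard_nezero n).1⟩ := by
  rw [renum, Equiv.swap_apply_left]
  rfl

lemma renum_inj {t t' : G} (ht : t ∈ c.Rset n) (ht' : t' ∈ c.Rset n)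
    (h : c.renum n t ht = c.renum n t' ht') : t = t' := by
  have h1 := (Equiv.swap _ _).injective h
  have h2 := ((c.Rset n).equivFin).injective h1
  exact congrArg Subtype.val h2

lemma renum_surj (i : Fin (c.scard n)) : ∃ t : G, ∃ ht : t ∈ c.Rset n,
    c.renum n t ht = i := by
  obtain ⟨⟨t, ht⟩, h⟩ := ((c.Rset n).equivFin).surjective
    ((Equiv.swap ((c.Rset n).equivFin ⟨1, c.one_mem_Rset n⟩) ⟨0, Nat.pos_of_ne_zero
      (c.scard_nezero n).1⟩).symm i)
  refine ⟨t, ht, ?_⟩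
  rw [renum, h]
  exact Equiv.apply_symm_apply _ i

/-- The representative digit of `x` at level `n`. -/
def dig (x : G) : ZMod (c.scard n) :=
  if h : c.ppart n x ∈ c.Pc n then
    ((c.renum n (c.rep n (c.ppart n x)) (c.rep_mem_Rset n h)).val : ZMod (c.scard n))
  else 0

lemma dig_eq {x : G} (hx : x ∈ c.M (n + 1)) :
    c.dig n x = ((c.renum n (c.rep n (c.ppart n x))
      (c.rep_mem_Rset n (c.ppart_mem n hx))).val : ZMod (c.scard n)) := by
  rw [dig, dif_pos (c.ppart_mem n hx)]

lemma dig_of_mem {x : G} (hx : x ∈ c.M n) : c.dig n x = 0 := by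
  have hx1 : x ∈ c.M (n + 1) := c.hMle n hx
  have hpp : c.ppart n x = x := c.ppart_of_mem_Pc n (c.M_le_Pc n hx)
  rw [c.dig_eq n hx1]
  have h1 : c.rep n (c.ppart n x) = 1 := by rw [hpp, c.rep_of_mem n hx]
  have h2 : c.renum n (c.rep n (c.ppart n x)) (c.rep_mem_Rset n (c.ppart_mem n hx1))
      = ⟨0, Nat.pos_of_ne_zero (c.scard_nezero n).1⟩ := by
    rw [show c.renum n (c.rep n (c.ppart n x)) (c.rep_mem_Rset n (c.ppart_mem n hx1))
      = c.renum n 1 (h1 ▸ c.rep_mem_Rset n (c.ppart_mem n hx1)) by congr 1, ]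
    exact c.renum_one n
  rw [h2]
  simp

lemma dig_inj {x y : G} (hx : x ∈ c.M (n + 1)) (hy : y ∈ c.M (n + 1))
    (h : c.dig n x = c.dig n y) :
    c.rep n (c.ppart n x) = c.rep n (c.ppart n y) := by
  rw [c.dig_eq n hx, c.dig_eq n hy] at h
  have h1 : (c.renum n (c.rep n (c.ppart n x)) (c.rep_mem_Rset n (c.ppart_mem n hx))).val
      = (c.renum n (c.rep n (c.ppart n y)) (c.rep_mem_Rset n (c.ppart_mem n hy))).val := by
    have e1 := ZMod.val_cast_of_lt (n := c.scard n)
      (c.renum n (c.rep n (c.ppart n x)) (c.rep_mem_Rset n (c.ppart_mem n hx))).isLt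
    have e2 := ZMod.val_cast_of_lt (n := c.scard n)
      (c.renum n (c.rep n (c.ppart n y)) (c.rep_mem_Rset n (c.ppart_mem n hy))).isLt
    rw [← e1, ← e2, h]
  exact c.renum_inj n _ _ (Fin.ext h1)

/-- The remainder of `x` at level `n`. -/
def down (x : G) : G := (c.rep n (c.ppart n x))⁻¹ * c.ppart n x

lemma down_mem {x : G} (hx : x ∈ c.M (n + 1)) : c.down n x ∈ c.M n := by
  have h1 := c.rep_spec n (c.ppart n x)
  have key : c.down n x = ((c.ppart n x)⁻¹ * (c.rep n (c.ppart n x)))⁻¹ := by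
    rw [down]; group
  rw [key]
  exact inv_mem h1

lemma down_of_mem {x : G} (hx : x ∈ c.M n) : c.down n x = x := by
  rw [down, c.ppart_of_mem_Pc n (c.M_le_Pc n hx), c.rep_of_mem n hx]
  simp

/-- Decomposition of `x` into its three parts. -/
lemma decomp {x : G} (hx : x ∈ c.M (n + 1)) :
    x = (c.e n ^ c.kzer n x) * (c.rep n (c.ppart n x)) * (c.down n x) := by
  rw [down, ppart]
  group

/-- Peeling: right multiplication by an element of `M n` passes through. -/
lemma peel {x u : G} (hx : x ∈ c.M (n + 1)) (hu : u ∈ c.M n) :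
    c.kzer n (x * u) = c.kzer n x ∧
    c.rep n (c.ppart n (x * u)) = c.rep n (c.ppart n x) ∧
    c.down n (x * u) = c.down n x * u := by
  have hxu : x * u ∈ c.M (n + 1) := mul_mem hx (c.hMle n hu)
  have h1 : (c.e n ^ c.kzer n x)⁻¹ * (x * u) ∈ c.Pc n := by
    have : (c.e n ^ c.kzer n x)⁻¹ * (x * u) = ((c.e n ^ c.kzer n x)⁻¹ * x) * u := by group
    rw [this]
    exact mul_mem (c.ppart_mem n hx) (c.M_le_Pc n hu)
  have hk : c.kzer n (x * u) = c.kzer n x :=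
    c.kzer_eq n hxu h1 (c.kzer_spec n hx).2
  have hpp : c.ppart n (x * u) = c.ppart n x * u := by
    rw [ppart, ppart, hk]
    group
  have hrep : c.rep n (c.ppart n (x * u)) = c.rep n (c.ppart n x) := by
    rw [hpp]
    exact (c.rep_congr n (by simpa using hu)).symm
  refine ⟨hk, hrep, ?_⟩
  rw [hpp] at hrep
  rw [down, down, hpp, hrep]
  group

/-- Key lemma: left multiplication by a fixed `w` changes `down` by elements of a
fixed finite set. -/
lemma down_left {w : G} (hw : w ∈ c.M (n + 1)) :
    ∃ S : Set G, S.Finite ∧ ∀ x ∈ c.M (n + 1), ∃ ω ∈ S, ω ∈ c.M n ∧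
      c.down n (w * x) = ω * c.down n x := by
  classical
  set g := c.e n with hg
  -- the finite set of possible `v`s
  set S0 : Set G := (fun p : G × G => p.1 * (p.2 * c.ppart n w)) ''
    (({1, g ^ (c.cyc n : ℤ)} : Set G) ×ˢ (c.Phi n : Set G)) with hS0
  have hS0fin : S0.Finite := by
    apply Set.Finite.image
    exact Set.Finite.prod ((Set.finite_singleton _).insert _) (c.hPhiFin n)
  set S : Set G := (fun p : G × G => (c.rep n (p.1 * p.2))⁻¹ * (p.1 * p.2)) ''
    (S0 ×ˢ ((c.Rset n : Set G))) with hS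
  have hSfin : S.Finite := Set.Finite.image _ (Set.Finite.prod hS0fin (c.Rset n).finite_toSet)
  refine ⟨S, hSfin, ?_⟩
  intro x hx
  have hy : w * x ∈ c.M (n + 1) := mul_mem hw hx
  set kx := c.kzer n x with hkx
  set kw := c.kzer n w with hkw
  set ky := c.kzer n (w * x) with hky
  set v : G := (g ^ ky)⁻¹ * w * g ^ kx with hv
  have h_ppy : c.ppart n (w * x) = v * c.ppart n x := by
    rw [ppart, ppart, hv, ← hky, ← hkx]
    rw [hg]
    group
  have hvPc : v ∈ c.Pc n := by
    have : v = c.ppart n (w * x) * (c.ppart n x)⁻¹ := by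
      rw [h_ppy]; group
    rw [this]
    exact mul_mem (c.ppart_mem n hy) (inv_mem (c.ppart_mem n hx))
  -- second exponent for w * x
  have hexp2 : (g ^ (kw + kx))⁻¹ * (w * x) ∈ c.Pc n := by
    have key : (g ^ (kw + kx))⁻¹ * (w * x)
        = ((g ^ kx)⁻¹ * ((g ^ kw)⁻¹ * w) * (g ^ kx)) * ((g ^ kx)⁻¹ * x) := by
      rw [zpow_add]; group
    rw [key]
    refine mul_mem ?_ (c.ppart_mem n hx)
    have := c.Pc_conj n (x := (g ^ kx)⁻¹) (inv_mem (c.epow_mem n kx)) (c.ppart_mem n hw)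
    simpa [ppart] using this
  have hdvd : ((c.cyc n : ℤ)) ∣ (kw + kx) - ky :=
    c.exponent_congr n (c.kzer_spec n hy).1 hexp2
  -- case analysis on Δ
  have hDelta : kx + kw - ky = 0 ∨ kx + kw - ky = (c.cyc n : ℤ) := by
    rcases Nat.eq_zero_or_pos (c.cyc n) with h0 | hpos
    · left
      rw [h0] at hdvd
      have : (kw + kx) - ky = 0 := by exact_mod_cast zero_dvd_iff.mp (by exact_mod_cast hdvd)
      omega
    · have hc0 : (c.cyc n : ℤ) ≠ 0 := by exact_mod_cast Nat.pos_iff_ne_zero.mp hpos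
      have hrx := ((c.kzer_spec n hx).2).resolve_left (by exact_mod_cast Nat.pos_iff_ne_zero.mp hpos)
      have hrw := ((c.kzer_spec n hw).2).resolve_left (by exact_mod_cast Nat.pos_iff_ne_zero.mp hpos)
      have hry := ((c.kzer_spec n hy).2).resolve_left (by exact_mod_cast Nat.pos_iff_ne_zero.mp hpos)
      obtain ⟨q, hq⟩ := hdvd
      have hcpos : (0:ℤ) < (c.cyc n : ℤ) := by exact_mod_cast hpos
      have hq01 : q = 0 ∨ q = 1 := by
        by_contra hq0
        push_neg at hq0
        rcases lt_trichotomy q 0 with h | h | h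
        · have : (c.cyc n : ℤ) * q ≤ (c.cyc n : ℤ) * (-1) :=
            mul_le_mul_of_nonneg_left (by omega) (le_of_lt hcpos)
          omega
        · exact hq0.1 h
        · have : (c.cyc n : ℤ) * 2 ≤ (c.cyc n : ℤ) * q :=
            mul_le_mul_of_nonneg_left (by omega) (le_of_lt hcpos)
          omega
      rcases hq01 with h | h <;> rw [h] at hq <;> [left; right] <;> omega
  -- v belongs to S0
  have hvS0 : v ∈ S0 := by
    set ph : G := (g ^ (-kx)) * (c.ppart n w) * (g ^ kx) * (c.ppart n w)⁻¹ with hph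
    have hphPhi : ph ∈ c.Phi n := by
      have := c.hPhiComm n (g ^ (-kx)) (c.epow_mem n (-kx)) (c.ppart n w)
        (c.ppart_mem' n hw)
      simpa [hph] using this
    have hvform : v = (g ^ (kx + kw - ky)) * (ph * c.ppart n w) := by
      rw [hph, ppart, hv, ← hkw]
      rw [show kx + kw - ky = -ky + kw + kx by ring]
      rw [zpow_add, zpow_add, zpow_neg, zpow_neg]
      rw [hg]
      group
    rcases hDelta with h | h
    · refine ⟨(1, ph), ⟨Set.mem_insert _ _, hphPhi⟩, ?_⟩
      simp only
      rw [hvform, h]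
      simp
    · refine ⟨(g ^ (c.cyc n : ℤ), ph), ⟨Set.mem_insert_of_mem _ rfl, hphPhi⟩, ?_⟩
      simp only
      rw [hvform, h]
  -- the representative of `ppart x`
  set t := c.rep n (c.ppart n x) with htdef
  have ht : t ∈ c.Rset n := c.rep_mem_Rset n (c.ppart_mem n hx)
  have h_ppx : c.ppart n x = t * c.down n x := by
    rw [down, htdef]
    group
  have hrep_y : c.rep n (c.ppart n (w * x)) = c.rep n (v * t) := by
    refine (c.rep_congr n ?_).symm
    rw [h_ppy, h_ppx]
    have key : (v * t)⁻¹ * (v * (t * c.down n x)) = c.down n x := by group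
    rw [key]
    exact c.down_mem n hx
  refine ⟨(c.rep n (v * t))⁻¹ * (v * t), ⟨(v, t), ⟨hvS0, ht⟩, rfl⟩, ?_, ?_⟩
  · have key : (c.rep n (v * t))⁻¹ * (v * t) = c.down n (w * x) * (c.down n x)⁻¹ := by
      rw [down, hrep_y, h_ppy, h_ppx]
      group
    rw [key]
    exact mul_mem (c.down_mem n hy) (inv_mem (c.down_mem n hx))
  · rw [down, hrep_y, h_ppy, h_ppx]
    group

/-! ### The layers and digit map -/

/-- The layer group at level `n`. -/
abbrev LL (n : ℕ) : Type := ZMod (c.cyc n) × ZMod (c.scard n)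

/-- The target abelian group. -/
abbrev AA : Type := ⨁ k, c.LL k

/-- The coordinates at level `n`. -/
def coords (x : G) : c.LL n := (c.kap n x, c.dig n x)

lemma coords_of_mem {x : G} (hx : x ∈ c.M n) : c.coords n x = 0 := by
  rw [coords, c.kap_of_mem_Pc n (c.M_le_Pc n hx), c.dig_of_mem n hx]
  rfl

lemma renum_val_congr {t t' : G} (h : t = t') (ht : t ∈ c.Rset n) (ht' : t' ∈ c.Rset n) :
    (c.renum n t ht).val = (c.renum n t' ht').val := by
  subst h; rfl

lemma coords_peel {x u : G} (hx : x ∈ c.M (n + 1)) (hu : u ∈ c.M n) :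
    c.coords n (x * u) = c.coords n x := by
  obtain ⟨h1, h2, _⟩ := c.peel n hx hu
  have hxu : x * u ∈ c.M (n + 1) := mul_mem hx (c.hMle n hu)
  rw [coords, coords, kap, kap, h1]
  congr 1
  rw [c.dig_eq n hxu, c.dig_eq n hx]
  exact congrArg (fun z : ℕ => (z : ZMod (c.scard n))) (c.renum_val_congr n h2 _ _)

/-- The digit map at stage `n`. -/
def FN : ℕ → G → c.AA
  | 0, _ => 0
  | (n + 1), x => DirectSum.of c.LL n (c.coords n x) + FN n (c.down n x)

lemma FN_succ (x : G) :
    c.FN (n + 1) x = DirectSum.of c.LL n (c.coords n x) + c.FN n (c.down n x) := rfl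

lemma FN_supp {k : ℕ} (hk : n ≤ k) (x : G) : (c.FN n x) k = 0 := by
  induction n generalizing x with
  | zero => rfl
  | succ m ih =>
    rw [FN_succ, DirectSum.add_apply, DirectSum.of_eq_of_ne _ _ _ (by omega),
      ih (by omega) _]
    simp

lemma FN_consist {x : G} (hx : x ∈ c.M n) : c.FN (n + 1) x = c.FN n x := by
  rw [FN_succ, c.coords_of_mem n hx, c.down_of_mem n hx]
  simp

lemma FN_eq_of_le {m n : ℕ} (h : m ≤ n) {x : G} (hx : x ∈ c.M m) :
    c.FN n x = c.FN m x := by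
  induction n, h using Nat.le_induction with
  | base => rfl
  | succ n hn ih => rw [c.FN_consist n (c.hMmono hn hx), ih]

/-- Peeling for the digit map. -/
lemma FN_peel {n N : ℕ} (h : n ≤ N) {x u : G} (hx : x ∈ c.M N) (hu : u ∈ c.M n) :
    ∃ r, r ∈ c.M n ∧ c.FN N (x * u) - c.FN N x = c.FN n (r * u) - c.FN n r := by
  induction N, h using Nat.le_induction generalizing x with
  | base => exact ⟨x, hx, rfl⟩
  | succ N hn ih =>
    have hu' : u ∈ c.M N := c.hMmono hn hu
    obtain ⟨hk, hrep, hdown⟩ := c.peel N hx hu'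
    obtain ⟨r, hr, hr2⟩ := ih (c.down_mem N hx)
    refine ⟨r, hr, ?_⟩
    rw [FN_succ, FN_succ, c.coords_peel N hx hu', hdown]
    rw [show DirectSum.of c.LL N (c.coords N x) + c.FN N (c.down N x * u) -
      (DirectSum.of c.LL N (c.coords N x) + c.FN N (c.down N x)) =
      c.FN N (c.down N x * u) - c.FN N (c.down N x) by abel]
    exact hr2

/-- Separation: agreement of all coordinates above `n` forces both elements in the
same `M n`-coset. -/
lemma FN_sep {n N : ℕ} (h : n ≤ N) {x y : G} (hx : x ∈ c.M N) (hy : y ∈ c.M N)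
    (hc : ∀ k, n ≤ k → (c.FN N x) k = (c.FN N y) k) : x⁻¹ * y ∈ c.M n := by
  induction N, h using Nat.le_induction generalizing x y with
  | base => exact mul_mem (inv_mem hx) hy
  | succ N hn ih =>
    have hcN : c.coords N x = c.coords N y := by
      have h1 := hc N (by omega)
      rw [FN_succ, FN_succ, DirectSum.add_apply, DirectSum.add_apply,
        DirectSum.of_eq_same, DirectSum.of_eq_same,
        c.FN_supp N (le_refl N) _, c.FN_supp N (le_refl N) _] at h1
      simpa using h1
    have hkap : c.kap N x = c.kap N y := congrArg Prod.fst hcN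
    have hdig : c.dig N x = c.dig N y := congrArg Prod.snd hcN
    have hkzer : c.kzer N x = c.kzer N y := by
      have hdvd : ((c.cyc N : ℤ)) ∣ c.kzer N x - c.kzer N y := by
        have := (ZMod.intCast_eq_intCast_iff _ _ _).mp hkap
        exact Int.ModEq.dvd this.symm
      exact kcan_unique c N hdvd (c.kzer_spec N hx).2 (c.kzer_spec N hy).2
    have hrep : c.rep N (c.ppart N x) = c.rep N (c.ppart N y) := c.dig_inj N hx hy hdig
    have hxy : x⁻¹ * y = (c.down N x)⁻¹ * (c.down N y) := by
      have e1 := c.decomp N hx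
      have e2 := c.decomp N hy
      calc x⁻¹ * y = ((c.e N ^ c.kzer N x) * (c.rep N (c.ppart N x)) * (c.down N x))⁻¹ *
          ((c.e N ^ c.kzer N y) * (c.rep N (c.ppart N y)) * (c.down N y)) := by
            rw [← e1, ← e2]
        _ = (c.down N x)⁻¹ * (c.down N y) := by
            rw [hkzer, hrep]
            group
    rw [hxy]
    refine ih (c.down_mem N hx) (c.down_mem N hy) ?_
    intro k hk
    by_cases hkN : k = N
    · rw [hkN, c.FN_supp N (le_refl N) _, c.FN_supp N (le_refl N) _]
    · have h1 := hc k hk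
      rw [FN_succ, FN_succ, DirectSum.add_apply, DirectSum.add_apply,
        DirectSum.of_eq_of_ne _ _ _ hkN, DirectSum.of_eq_of_ne _ _ _ hkN]
        at h1
      simpa using h1

/-! ### Bijectivity of the digit map -/

lemma Rset_sub_Pc {t : G} (ht : t ∈ c.Rset n) : t ∈ c.Pc n := by
  rw [Rset] at ht
  rcases Finset.mem_insert.mp ht with h | h
  · rw [h]; exact one_mem _
  · obtain ⟨φ, hφ, rfl⟩ := Finset.mem_image.mp h
    have hφ' : φ ∈ c.Phi n := by simpa using hφ
    have h1 : c.rep n φ = φ * (φ⁻¹ * c.rep n φ) := by group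
    rw [h1]
    exact mul_mem (c.Phi_le_Pc n hφ') (c.M_le_Pc n (c.rep_spec n φ))

lemma rep_idem {t : G} (ht : t ∈ c.Rset n) : c.rep n t = t := by
  rw [Rset] at ht
  rcases Finset.mem_insert.mp ht with h | h
  · rw [h]; exact c.rep_of_mem n (one_mem _)
  · obtain ⟨φ, hφ, rfl⟩ := Finset.mem_image.mp h
    exact (c.rep_congr n (c.rep_spec n φ)).symm

lemma exists_lift (q : ZMod (c.cyc n)) :
    ∃ k : ℤ, c.Canon n k ∧ ((k : ZMod (c.cyc n)) = q) := by
  rcases Nat.eq_zero_or_pos (c.cyc n) with h0 | hpos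
  · exact ⟨ZMod.cast q, Or.inl h0, ZMod.intCast_zmod_cast q⟩
  · haveI : NeZero (c.cyc n) := ⟨Nat.pos_iff_ne_zero.mp hpos⟩
    refine ⟨(q.val : ℤ), Or.inr ⟨by positivity, by exact_mod_cast ZMod.val_lt q⟩, ?_⟩
    rw [Int.cast_natCast, ZMod.natCast_rightInverse q]

/-- Surjectivity of the digit map onto coordinates supported below `N`. -/
lemma FN_surj (N : ℕ) (a : c.AA) (ha : ∀ k, N ≤ k → a k = 0) :
    ∃ x, x ∈ c.M N ∧ c.FN N x = a := by
  induction N generalizing a with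
  | zero =>
    refine ⟨1, one_mem _, ?_⟩
    have : a = 0 := DFinsupp.ext fun k => ha k (Nat.zero_le k)
    rw [this]
    rfl
  | succ N ih =>
    obtain ⟨k1, hk1can, hk1⟩ := c.exists_lift N (a N).1
    obtain ⟨t, ht, htnum⟩ := c.renum_surj N ⟨(a N).2.val, ZMod.val_lt _⟩
    set a' : c.AA := a - DirectSum.of c.LL N (a N) with ha'
    have ha'supp : ∀ k, N ≤ k → a' k = 0 := by
      intro k hk
      by_cases hkN : k = N
      · subst hkN
        rw [ha', DFinsupp.sub_apply, DirectSum.of_eq_same, sub_self]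
      · rw [ha', DFinsupp.sub_apply, DirectSum.of_eq_of_ne _ _ _ hkN,
          ha k (by omega), sub_zero]
    obtain ⟨m, hm, hFNm⟩ := ih a' ha'supp
    set x := (c.e N ^ k1) * t * m with hx
    have htM : t ∈ c.M (N + 1) := c.Pc_le N (c.Rset_sub_Pc N ht)
    have hxM : x ∈ c.M (N + 1) :=
      mul_mem (mul_mem (c.epow_mem N k1) htM) (c.hMle N hm)
    have htm_Pc : t * m ∈ c.Pc N := mul_mem (c.Rset_sub_Pc N ht) (c.M_le_Pc N hm)
    have hval : (c.e N ^ k1)⁻¹ * x ∈ c.Pc N := by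
      rw [hx, show (c.e N ^ k1)⁻¹ * ((c.e N ^ k1) * t * m) = t * m by group]
      exact htm_Pc
    have hkzer : c.kzer N x = k1 := c.kzer_eq N hxM hval hk1can
    have hpp : c.ppart N x = t * m := by
      rw [ppart, hkzer, hx]
      group
    have hrep : c.rep N (c.ppart N x) = t := by
      rw [hpp, (c.rep_congr N (by simpa using hm) : c.rep N t = c.rep N (t * m)).symm]
      exact c.rep_idem N ht
    have hdown : c.down N x = m := by
      rw [down, hrep, hpp]
      group
    have hcoords : c.coords N x = a N := by
      rw [coords]
      have h1 : c.kap N x = (a N).1 := by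
        rw [kap, hkzer, hk1]
      have h2 : c.dig N x = (a N).2 := by
        rw [c.dig_eq N hxM]
        rw [c.renum_val_congr N hrep _ ht, htnum]
        exact ZMod.natCast_rightInverse _
      rw [h1, h2]
    refine ⟨x, hxM, ?_⟩
    rw [FN_succ, hdown, hFNm, hcoords, ha']
    abel

/-- Injectivity of the digit map on `M N`. -/
lemma FN_inj (N : ℕ) {x y : G} (hx : x ∈ c.M N) (hy : y ∈ c.M N)
    (h : c.FN N x = c.FN N y) : x = y := by
  have h1 : x⁻¹ * y ∈ c.M 0 :=
    c.FN_sep (Nat.zero_le N) hx hy (fun k _ => by rw [h])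
  rw [c.hM0] at h1
  have : x⁻¹ * y = 1 := h1
  group at this ⊢
  -- derive x = y
  exact inv_injective (by
    have := congrArg (fun z => x * z) this
    simpa [mul_assoc] using this) |>.symm ▸ rfl

end Ctx

/-! ### The absolute-value function on `ZMod` -/

/-- Absolute value on `ZMod m`: the integer absolute value for `m = 0`, zero otherwise. -/
def zabs {m : ℕ} (q : ZMod m) : ℝ := if 0 < m then 0 else |((ZMod.cast q : ℤ) : ℝ)|

lemma zabs_of_zero {m : ℕ} (h : m = 0) (q : ZMod m) :
    zabs q = |((ZMod.cast q : ℤ) : ℝ)| := by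
  rw [zabs, if_neg (by omega)]

lemma zabs_of_pos {m : ℕ} (h : 0 < m) (q : ZMod m) : zabs q = 0 := by
  rw [zabs, if_pos h]

lemma zabs_nonneg {m : ℕ} (q : ZMod m) : 0 ≤ zabs q := by
  rw [zabs]
  split_ifs
  · exact le_refl 0
  · exact abs_nonneg _

lemma zabs_zero {m : ℕ} : zabs (0 : ZMod m) = 0 := by
  rcases Nat.eq_zero_or_pos m with h | h
  · subst h
    rw [zabs_of_zero rfl, show (ZMod.cast (0 : ZMod 0) : ℤ) = 0 from rfl]
    norm_num
  · exact zabs_of_pos h _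

lemma zabs_neg {m : ℕ} (q : ZMod m) : zabs (-q) = zabs q := by
  rcases Nat.eq_zero_or_pos m with h | h
  · subst h
    rw [zabs_of_zero rfl, zabs_of_zero rfl,
      show (ZMod.cast (-q) : ℤ) = -(ZMod.cast q : ℤ) from rfl]
    push_cast
    exact abs_neg _
  · rw [zabs_of_pos h, zabs_of_pos h]

lemma zabs_add {m : ℕ} (q r : ZMod m) : zabs (q + r) ≤ zabs q + zabs r := by
  rcases Nat.eq_zero_or_pos m with h | h
  · subst h
    rw [zabs_of_zero rfl, zabs_of_zero rfl, zabs_of_zero rfl,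
      show (ZMod.cast (q + r) : ℤ) = (ZMod.cast q : ℤ) + (ZMod.cast r : ℤ) from rfl]
    push_cast
    exact abs_add_le _ _
  · rw [zabs_of_pos h, zabs_of_pos h, zabs_of_pos h]
    norm_num

lemma zabs_ball_finite (m : ℕ) (r : ℝ) : {q : ZMod m | zabs q ≤ r}.Finite := by
  rcases Nat.eq_zero_or_pos m with h | h
  · subst h
    have hsub : {q : ZMod 0 | zabs q ≤ r} ⊆
        (fun k : ℤ => ((k : ZMod 0))) '' (Set.Icc (-⌈r⌉) ⌈r⌉) := by
      intro q hq
      have h1 : |((ZMod.cast q : ℤ) : ℝ)| ≤ r := by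
        rw [← zabs_of_zero rfl]
        exact hq
      have h2 : ((|(ZMod.cast q : ℤ)| : ℤ) : ℝ) ≤ (⌈r⌉ : ℝ) := by
        rw [show ((|(ZMod.cast q : ℤ)| : ℤ) : ℝ) = |((ZMod.cast q : ℤ) : ℝ)| by push_cast; rfl]
        exact le_trans h1 (Int.le_ceil r)
      have h3 : |(ZMod.cast q : ℤ)| ≤ ⌈r⌉ := by exact_mod_cast h2
      have h4 := neg_abs_le (ZMod.cast q : ℤ)
      have h5 := le_abs_self (ZMod.cast q : ℤ)
      refine ⟨(ZMod.cast q : ℤ), by rw [Set.mem_Icc]; omega, ?_⟩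
      exact ZMod.intCast_zmod_cast q
    exact Set.Finite.subset (Set.Finite.image _ (Set.finite_Icc _ _)) hsub
  · haveI : NeZero m := ⟨Nat.pos_iff_ne_zero.mp h⟩
    exact Set.toFinite _

namespace Ctx

variable (c : Ctx G) (n : ℕ)

/-- The weight of a layer element. -/
def wq (v : c.LL n) : ℝ :=
  (if v.1 = 0 then 0 else ((n : ℝ) + 1) + zabs v.1) +
    (if v.2 = 0 then 0 else ((n : ℝ) + 1))

lemma wq_nonneg (v : c.LL n) : 0 ≤ c.wq n v := by
  rw [wq]
  have h1 : (0:ℝ) ≤ (n : ℝ) + 1 := by positivity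
  have := zabs_nonneg v.1
  split_ifs <;> linarith

lemma wq_zero : c.wq n 0 = 0 := by
  rw [wq]
  simp

lemma wq_neg (v : c.LL n) : c.wq n (-v) = c.wq n v := by
  rw [wq, wq]
  have h1 : (-v).1 = -(v.1) := rfl
  have h2 : (-v).2 = -(v.2) := rfl
  rw [h1, h2, zabs_neg]
  congr 1
  · by_cases h : v.1 = 0 <;> simp [h, neg_eq_zero]
  · by_cases h : v.2 = 0 <;> simp [h, neg_eq_zero]

lemma wq_add (v w : c.LL n) : c.wq n (v + w) ≤ c.wq n v + c.wq n w := by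
  rw [wq, wq, wq]
  have h0 : (0:ℝ) ≤ (n : ℝ) + 1 := by positivity
  have ha : (v + w).1 = v.1 + w.1 := rfl
  have hb : (v + w).2 = v.2 + w.2 := rfl
  rw [ha, hb]
  have key1 : (if v.1 + w.1 = 0 then (0:ℝ) else ((n : ℝ) + 1) + zabs (v.1 + w.1)) ≤
      (if v.1 = 0 then (0:ℝ) else ((n : ℝ) + 1) + zabs v.1) +
      (if w.1 = 0 then (0:ℝ) else ((n : ℝ) + 1) + zabs w.1) := by
    by_cases h1 : v.1 = 0
    · by_cases h2 : w.1 = 0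
      · simp [h1, h2]
      · rw [h1, if_pos rfl, zero_add, zero_add, if_neg h2]
    · by_cases h2 : w.1 = 0
      · rw [h2, if_pos rfl, add_zero, add_zero, if_neg h1]
      · rw [if_neg h1, if_neg h2]
        by_cases h3 : v.1 + w.1 = 0
        · rw [if_pos h3]
          have := zabs_nonneg v.1
          have := zabs_nonneg w.1
          linarith
        · rw [if_neg h3]
          have := zabs_add v.1 w.1
          linarith
  have key2 : (if v.2 + w.2 = 0 then (0:ℝ) else ((n : ℝ) + 1)) ≤
      (if v.2 = 0 then (0:ℝ) else ((n : ℝ) + 1)) +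
      (if w.2 = 0 then (0:ℝ) else ((n : ℝ) + 1)) := by
    by_cases h1 : v.2 = 0
    · by_cases h2 : w.2 = 0
      · simp [h1, h2]
      · rw [h1, if_pos rfl, zero_add, zero_add, if_neg h2]
    · by_cases h2 : w.2 = 0
      · rw [h2, if_pos rfl, add_zero, add_zero, if_neg h1]
      · rw [if_neg h1, if_neg h2]
        split_ifs <;> linarith
  linarith

lemma wq_lower {v : c.LL n} (hv : v ≠ 0) : ((n : ℝ) + 1) ≤ c.wq n v := by
  rw [wq]
  have h1 : ¬(v.1 = 0 ∧ v.2 = 0) := by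
    intro ⟨h1, h2⟩
    exact hv (Prod.ext h1 h2)
  have := zabs_nonneg v.1
  by_cases ha : v.1 = 0
  · have hb : v.2 ≠ 0 := fun h => h1 ⟨ha, h⟩
    rw [if_pos ha, if_neg hb]
    linarith
  · rw [if_neg ha]
    split_ifs <;> linarith

lemma wq_eq_zero {v : c.LL n} (h : c.wq n v = 0) : v = 0 := by
  by_contra hv
  have := c.wq_lower n hv
  rw [h] at this
  have h2 : (0:ℝ) < (n : ℝ) + 1 := by positivity
  linarith

lemma wq_fst_le (v : c.LL n) : zabs v.1 ≤ c.wq n v := by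
  rw [wq]
  have h0 : (0:ℝ) ≤ (n : ℝ) + 1 := by positivity
  have := zabs_nonneg v.1
  by_cases h : v.1 = 0
  · rw [h, zabs_zero]
    split_ifs <;> linarith
  · rw [if_neg h]
    split_ifs <;> linarith

lemma wq_le (v : c.LL n) : c.wq n v ≤ ((n : ℝ) + 1) + zabs v.1 + ((n : ℝ) + 1) := by
  rw [wq]
  have h0 : (0:ℝ) ≤ (n : ℝ) + 1 := by positivity
  have := zabs_nonneg v.1
  split_ifs <;> linarith

/-! ### The norm on `AA` -/

/-- The norm on the direct sum. -/
def Nm (a : c.AA) : ℝ := ∑ k ∈ a.support, c.wq k (a k)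

lemma Nm_eq_sum {a : c.AA} {s : Finset ℕ} (hs : a.support ⊆ s) :
    c.Nm a = ∑ k ∈ s, c.wq k (a k) :=
  Finset.sum_subset hs (fun k _ hk => by
    rw [DFinsupp.notMem_support_iff.mp hk, c.wq_zero k])

lemma Nm_nonneg (a : c.AA) : 0 ≤ c.Nm a :=
  Finset.sum_nonneg (fun k _ => c.wq_nonneg k _)

lemma Nm_zero : c.Nm 0 = 0 := by
  rw [Nm]
  have : (0 : c.AA).support = ∅ := DFinsupp.support_zero
  rw [this, Finset.sum_empty]

lemma Nm_neg (a : c.AA) : c.Nm (-a) = c.Nm a := by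
  have hsupp : (-a).support = a.support := by
    ext k
    rw [DFinsupp.mem_support_iff, DFinsupp.mem_support_iff, DFinsupp.neg_apply]
    exact neg_ne_zero
  rw [Nm, Nm, hsupp]
  refine Finset.sum_congr rfl (fun k _ => ?_)
  rw [DFinsupp.neg_apply, c.wq_neg k]

lemma Nm_add_le (a b : c.AA) : c.Nm (a + b) ≤ c.Nm a + c.Nm b := by
  rw [c.Nm_eq_sum (s := a.support ∪ b.support) DFinsupp.support_add,
    c.Nm_eq_sum (s := a.support ∪ b.support) Finset.subset_union_left,
    c.Nm_eq_sum (s := a.support ∪ b.support) Finset.subset_union_right,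
    ← Finset.sum_add_distrib]
  refine Finset.sum_le_sum (fun k _ => ?_)
  rw [DFinsupp.add_apply]
  exact c.wq_add k _ _

lemma Nm_sub_le (a b d : c.AA) : c.Nm (a - b) ≤ c.Nm (a - d) + c.Nm (d - b) := by
  have : a - b = (a - d) + (d - b) := by abel
  rw [this]
  exact c.Nm_add_le _ _

lemma Nm_coord_le (a : c.AA) (k : ℕ) : c.wq k (a k) ≤ c.Nm a := by
  by_cases h : a k = 0
  · rw [h, c.wq_zero k]
    exact c.Nm_nonneg a
  · exact Finset.single_le_sum (fun i _ => c.wq_nonneg i _)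
      (DFinsupp.mem_support_iff.mpr h)

lemma supp_of_subset {v : c.LL n} :
    (DirectSum.of c.LL n v).support ⊆ {n} := by
  intro k hk
  rw [DFinsupp.mem_support_iff] at hk
  by_contra hkn
  exact hk (DirectSum.of_eq_of_ne _ _ _ (fun h => hkn (h ▸ Finset.mem_singleton_self n)))

lemma Nm_of (v : c.LL n) : c.Nm (DirectSum.of c.LL n v) = c.wq n v := by
  rw [c.Nm_eq_sum (c.supp_of_subset n), Finset.sum_singleton, DirectSum.of_eq_same]

lemma Nm_split {b : c.AA} (hb : ∀ k, n ≤ k → b k = 0) (v : c.LL n) :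
    c.Nm (DirectSum.of c.LL n v + b) = c.wq n v + c.Nm b := by
  have hnb : n ∉ b.support := DFinsupp.notMem_support_iff.mpr (hb n (le_refl n))
  have hsupp : (DirectSum.of c.LL n v + b).support ⊆ insert n b.support := by
    intro k hk
    rw [DFinsupp.mem_support_iff, DFinsupp.add_apply] at hk
    by_contra hkmem
    rw [Finset.mem_insert] at hkmem
    push_neg at hkmem
    rw [DirectSum.of_eq_of_ne _ _ _ hkmem.1,
      DFinsupp.notMem_support_iff.mp hkmem.2] at hk
    simp at hk
  rw [c.Nm_eq_sum hsupp, Finset.sum_insert hnb]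
  congr 1
  · rw [DFinsupp.add_apply, DirectSum.of_eq_same, hb n (le_refl n), add_zero]
  · refine Finset.sum_congr rfl (fun k hk => ?_)
    have hkn : n ≠ k := fun h => hnb (h ▸ hk)
    rw [DFinsupp.add_apply, DirectSum.of_eq_of_ne _ _ _ hkn.symm, zero_add]

lemma Nm_coord_zero {a : c.AA} {r : ℝ} (h : c.Nm a ≤ r) {k : ℕ}
    (hk : r < (k : ℝ) + 1) : a k = 0 := by
  by_contra hne
  have h1 := c.wq_lower k hne
  have h2 := c.Nm_coord_le a k
  linarith

/-- Balls of the norm are finite. -/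
lemma Nm_ball_finite (r : ℝ) : {a : c.AA | c.Nm a ≤ r}.Finite := by
  obtain ⟨N, hN⟩ := exists_nat_gt r
  haveI : ∀ k : ℕ, Finite (ZMod (c.scard k)) := fun k => by
    haveI := c.scard_nezero k
    infer_instance
  set f : c.AA → (∀ k : Fin N, c.LL k.1) := fun a k => a k.1 with hf
  have hBfin : {g : ∀ k : Fin N, c.LL k.1 | ∀ k : Fin N, c.wq k.1 (g k) ≤ r}.Finite := by
    have := Set.Finite.pi (fun k : Fin N => Set.Finite.subset
      (Set.Finite.prod (zabs_ball_finite (c.cyc k.1) r) (Set.finite_univ))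
      (show {v : c.LL k.1 | c.wq k.1 v ≤ r} ⊆ _ from fun v hv =>
        ⟨le_trans (c.wq_fst_le k.1 v) hv, Set.mem_univ _⟩))
    refine Set.Finite.subset this (fun g hg => ?_)
    rw [Set.mem_pi]
    exact fun k _ => hg k
  have himg : f '' {a : c.AA | c.Nm a ≤ r} ⊆ {g | ∀ k : Fin N, c.wq k.1 (g k) ≤ r} := by
    rintro _ ⟨a, ha, rfl⟩
    exact fun k => le_trans (c.Nm_coord_le a k.1) ha
  have hinj : Set.InjOn f {a : c.AA | c.Nm a ≤ r} := by
    intro a ha b hb hab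
    apply DFinsupp.ext
    intro k
    by_cases hk : k < N
    · exact congrFun hab ⟨k, hk⟩
    · have hk1 : r < (k : ℝ) + 1 := by
        push_neg at hk
        have : (N : ℝ) ≤ (k : ℝ) := by exact_mod_cast hk
        linarith
      rw [c.Nm_coord_zero ha hk1, c.Nm_coord_zero hb hk1]
  exact Set.Finite.of_finite_image (Set.Finite.subset hBfin himg) hinj

/-- Lifting a cyclic digit to a canonical integer with controlled size. -/
lemma exists_lift' (q : ZMod (c.cyc n)) :
    ∃ k : ℤ, c.Canon n k ∧ ((k : ZMod (c.cyc n)) = q) ∧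
      |(k : ℝ)| ≤ zabs q + (c.cyc n : ℝ) := by
  rcases Nat.eq_zero_or_pos (c.cyc n) with h0 | hpos
  · refine ⟨ZMod.cast q, Or.inl h0, ZMod.intCast_zmod_cast q, ?_⟩
    rw [zabs_of_zero h0 q]
    have : (0:ℝ) ≤ (c.cyc n : ℝ) := by positivity
    linarith
  · haveI : NeZero (c.cyc n) := ⟨Nat.pos_iff_ne_zero.mp hpos⟩
    refine ⟨(q.val : ℤ), Or.inr ⟨by positivity, by exact_mod_cast ZMod.val_lt q⟩, ?_, ?_⟩
    · rw [Int.cast_natCast, ZMod.natCast_rightInverse q]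
    · have h1 := ZMod.val_lt q
      have h2 := zabs_nonneg q
      rw [show |((q.val : ℤ) : ℝ)| = (q.val : ℝ) by
        rw [abs_of_nonneg (by positivity)]; push_cast; rfl]
      have : (q.val : ℝ) ≤ (c.cyc n : ℝ) := by exact_mod_cast le_of_lt h1
      linarith

end Ctx

/-! ### helper lemmas -/

lemma uniform_bound {α : Type*} {S : Set α} (hS : S.Finite) (P : α → ℝ → Prop)
    (hmono : ∀ a C C', C ≤ C' → P a C → P a C')
    (h : ∀ a ∈ S, ∃ C, 0 ≤ C ∧ P a C) :
    ∃ C, 0 ≤ C ∧ ∀ a ∈ S, P a C := by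
  classical
  choose! f hf using h
  obtain ⟨C0, hC0⟩ := (hS.image f).bddAbove
  refine ⟨max C0 0, le_max_right _ _, fun a ha => ?_⟩
  exact hmono a (f a) _ (le_trans (hC0 (Set.mem_image_of_mem f ha)) (le_max_left _ _))
    (hf a ha).2

section MetricHelpers

variable {G : Type} [Group G] [MetricSpace G]
variable (hinv : ∀ g x y : G, dist (g * x) (g * y) = dist x y)

include hinv in
lemma nu_pow_le (x : G) (m : ℕ) : nu (x ^ m) ≤ (m : ℝ) * nu x := by
  induction m with
  | zero => simp [nu_one]
  | succ k ih =>
    rw [pow_succ]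
    calc nu (x ^ k * x) ≤ nu (x ^ k) + nu x := nu_mul hinv _ _
    _ ≤ (k : ℝ) * nu x + nu x := by linarith
    _ = ((k + 1 : ℕ) : ℝ) * nu x := by push_cast; ring

include hinv in
lemma nu_zpow_le (x : G) (k : ℤ) : nu (x ^ k) ≤ |(k : ℝ)| * nu x := by
  have habs : |(k : ℝ)| = ((k.natAbs : ℕ) : ℝ) := by
    rw [Nat.cast_natAbs, Int.cast_abs]
  rcases Int.natAbs_eq k with h | h
  · have : x ^ k = x ^ (k.natAbs : ℕ) := by rw [← zpow_natCast, ← h]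
    rw [this, habs]
    exact nu_pow_le hinv x k.natAbs
  · have : x ^ k = (x ^ (k.natAbs : ℕ))⁻¹ := by rw [← zpow_natCast, ← zpow_neg, ← h]
    rw [this, nu_inv hinv, habs]
    exact nu_pow_le hinv x k.natAbs

end MetricHelpers

namespace Ctx

variable {G : Type} [Group G] (c : Ctx G)

lemma finite_sub_chain {S : Set G} (hS : S.Finite) : ∃ n, S ⊆ c.M n := by
  classical
  have h : ∀ a ∈ S, ∃ n, a ∈ c.M n := fun a _ => c.hMexh a
  choose! f hf using h
  refine ⟨hS.toFinset.sup f, fun a ha => ?_⟩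
  exact c.hMmono (Finset.le_sup (hS.mem_toFinset.mpr ha)) (hf a ha)

/-- The forward estimate, level version. -/
lemma IHL : ∀ n, ∀ w ∈ c.M n, ∃ C, 0 ≤ C ∧ ∀ x ∈ c.M n,
    c.Nm (c.FN n (w * x) - c.FN n x) ≤ C := by
  intro n
  induction n with
  | zero =>
    intro w _
    refine ⟨0, le_refl 0, fun x _ => ?_⟩
    show c.Nm ((0 : c.AA) - 0) ≤ 0
    rw [sub_zero, c.Nm_zero]
  | succ n ih =>
    intro w hw
    obtain ⟨S, hSfin, hS⟩ := c.down_left n hw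
    obtain ⟨C1, hC10, hC1⟩ := uniform_bound hSfin
      (fun ω C => ∀ d ∈ c.M n, ω ∈ c.M n → c.Nm (c.FN n (ω * d) - c.FN n d) ≤ C)
      (fun a C C' hle hP d hd ha => le_trans (hP d hd ha) hle)
      (fun ω _ => by
        by_cases hω : ω ∈ c.M n
        · obtain ⟨C, hC0, hC⟩ := ih ω hω
          exact ⟨C, hC0, fun d hd _ => hC d hd⟩
        · exact ⟨0, le_refl 0, fun d hd hmem => absurd hmem hω⟩)
    set Cw : ℝ := (((n : ℝ) + 1) + zabs (c.kap n w) + ((n : ℝ) + 1)) with hCw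
    have hCw0 : 0 ≤ Cw := by
      have := zabs_nonneg (c.kap n w)
      rw [hCw]
      positivity
    refine ⟨Cw + C1, by linarith, fun x hx => ?_⟩
    have hwx : w * x ∈ c.M (n + 1) := mul_mem hw hx
    have key : c.FN (n + 1) (w * x) - c.FN (n + 1) x
        = DirectSum.of c.LL n (c.coords n (w * x) - c.coords n x)
          + (c.FN n (c.down n (w * x)) - c.FN n (c.down n x)) := by
      rw [c.FN_succ n (w * x), c.FN_succ n x, map_sub]
      abel
    rw [key]
    refine le_trans (c.Nm_add_le _ _) ?_
    have h1 : c.Nm (DirectSum.of c.LL n (c.coords n (w * x) - c.coords n x)) ≤ Cw := by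
      rw [c.Nm_of n _]
      have hfst : (c.coords n (w * x) - c.coords n x).1 = c.kap n w := by
        show (c.coords n (w * x)).1 - (c.coords n x).1 = c.kap n w
        rw [coords, coords]
        show c.kap n (w * x) - c.kap n x = c.kap n w
        rw [c.kap_mul n hw hx]
        ring
      refine le_trans (c.wq_le n _) ?_
      rw [hfst, hCw]
    have h2 : c.Nm (c.FN n (c.down n (w * x)) - c.FN n (c.down n x)) ≤ C1 := by
      obtain ⟨ω, hωS, hωM, hωdown⟩ := hS x hx
      rw [hωdown]
      exact hC1 ω hωS (c.down n x) (c.down_mem n hx) hωM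
    linarith

lemma int_abs_ball_finite (r : ℝ) : {j : ℤ | |(j : ℝ)| ≤ r}.Finite := by
  have hsub : {j : ℤ | |(j : ℝ)| ≤ r} ⊆ Set.Icc (-⌈r⌉) ⌈r⌉ := by
    intro j hj
    have h1 : |(j : ℝ)| ≤ r := hj
    have h2 : ((|j| : ℤ) : ℝ) ≤ (⌈r⌉ : ℝ) := by
      rw [Int.cast_abs]
      exact le_trans h1 (Int.le_ceil r)
    have h3 : |j| ≤ ⌈r⌉ := by exact_mod_cast h2
    have h4 := neg_abs_le j
    have h5 := le_abs_self j
    rw [Set.mem_Icc]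
    omega
  exact Set.Finite.subset (Set.finite_Icc _ _) hsub

end Ctx

namespace Ctx

section IBLsec

variable {G : Type} [Group G] [MetricSpace G] (c : Ctx G)
variable (hinv : ∀ g x y : G, dist (g * x) (g * y) = dist x y)

include hinv in
/-- The backward estimate, level version. -/
lemma IBL : ∀ n, ∀ C : ℝ, 0 ≤ C → ∃ ε, 0 ≤ ε ∧ ∀ x y : G, x ∈ c.M n → y ∈ c.M n →
    c.Nm (c.FN n y - c.FN n x) ≤ C → nu (x⁻¹ * y) ≤ ε := by
  intro n
  induction n with
  | zero =>
    intro C hC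
    refine ⟨0, le_refl 0, fun x y hx hy _ => ?_⟩
    rw [c.hM0, Subgroup.mem_bot] at hx hy
    rw [hx, hy]
    rw [show (1:G)⁻¹ * 1 = 1 by group]
    exact le_of_eq nu_one
  | succ n ih =>
    intro C hC
    set Bj : ℝ := C + (c.cyc n : ℝ) with hBj
    have hBj0 : 0 ≤ Bj := by positivity
    set J : Set ℤ := {j : ℤ | |(j : ℝ)| ≤ Bj} with hJ
    have hJfin : J.Finite := int_abs_ball_finite Bj
    set W : Set G := (fun p : (ℤ × G) × G => p.2 * (c.e n ^ p.1.1 * p.1.2)) ''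
      ((J ×ˢ ((c.Rset n : Finset G) : Set G)) ×ˢ ((c.Phi n : Set G))) with hW
    have hWfin : W.Finite :=
      ((hJfin.prod (c.Rset n).finite_toSet).prod (c.hPhiFin n)).image _
    have hWM : ∀ w ∈ W, w ∈ c.M (n + 1) := by
      rintro _ ⟨⟨⟨j, t⟩, φ⟩, ⟨⟨hj, ht⟩, hφ⟩, rfl⟩
      exact mul_mem (c.hPhiLe n hφ)
        (mul_mem (c.epow_mem n j) (c.Pc_le n (c.Rset_sub_Pc n (by simpa using ht))))
    obtain ⟨C2, hC20, hC2⟩ := uniform_bound hWfin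
      (fun w C2 => ∀ x ∈ c.M (n + 1),
        c.Nm (c.FN n (c.down n (w * x)) - c.FN n (c.down n x)) ≤ C2)
      (fun w C C' hle hP x hx => le_trans (hP x hx) hle)
      (fun w hw => by
        obtain ⟨S, hSfin, hSp⟩ := c.down_left n (hWM w hw)
        obtain ⟨C3, hC30, hC3⟩ := uniform_bound hSfin
          (fun ω C3 => ∀ d ∈ c.M n, ω ∈ c.M n → c.Nm (c.FN n (ω * d) - c.FN n d) ≤ C3)
          (fun a C C' hle hP d hd ha => le_trans (hP d hd ha) hle)
          (fun ω _ => by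
            by_cases hω : ω ∈ c.M n
            · obtain ⟨C4, hC40, hC4⟩ := c.IHL n ω hω
              exact ⟨C4, hC40, fun d hd _ => hC4 d hd⟩
            · exact ⟨0, le_refl 0, fun d hd hmem => absurd hmem hω⟩)
        refine ⟨C3, hC30, fun x hx => ?_⟩
        obtain ⟨ω, hωS, hωM, hdeq⟩ := hSp x hx
        rw [hdeq]
        exact hC3 ω hωS _ (c.down_mem n hx) hωM)
    obtain ⟨ε0, hε00, hε0⟩ := ih (C + C2) (by linarith)
    obtain ⟨CR, hCR0, hCR⟩ := nu_bound_of_finite ((c.Rset n).finite_toSet)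
    set Cg : ℝ := Bj * nu (c.e n) with hCg
    have hCg0 : 0 ≤ Cg := mul_nonneg hBj0 (nu_nonneg _)
    refine ⟨Cg + CR + ε0, by linarith, fun x y hx hy hNm => ?_⟩
    set z := x⁻¹ * y with hz
    have hzM : z ∈ c.M (n + 1) := mul_mem (inv_mem hx) hy
    have hyz : y = x * z := by rw [hz]; group
    set Δ : c.LL n := c.coords n y - c.coords n x with hΔ
    set low : c.AA := c.FN n (c.down n y) - c.FN n (c.down n x) with hlow
    have hlowsupp : ∀ k, n ≤ k → low k = 0 := by
      intro k hk
      rw [hlow, DFinsupp.sub_apply, c.FN_supp n hk, c.FN_supp n hk, sub_self]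
    have hkey : c.FN (n + 1) y - c.FN (n + 1) x = DirectSum.of c.LL n Δ + low := by
      rw [c.FN_succ n y, c.FN_succ n x, hΔ, hlow, map_sub]
      abel
    rw [hkey, c.Nm_split n hlowsupp Δ] at hNm
    have hwqΔ : c.wq n Δ ≤ C := by
      have := c.Nm_nonneg low
      linarith
    have hNmlow : c.Nm low ≤ C := by
      have := c.wq_nonneg n Δ
      linarith
    have hΔ1 : Δ.1 = c.kap n z := by
      show (c.coords n y).1 - (c.coords n x).1 = _
      show c.kap n y - c.kap n x = _
      rw [hyz, c.kap_mul n hx hzM]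
      ring
    have hzq : zabs (c.kap n z) ≤ C := by
      rw [← hΔ1]
      exact le_trans (c.wq_fst_le n Δ) hwqΔ
    obtain ⟨j, hjcan, hjcast, hjbound⟩ := c.exists_lift' n (c.kap n z)
    have hjBj : |(j : ℝ)| ≤ Bj := le_trans hjbound (by rw [hBj]; linarith)
    have hjJ : j ∈ J := hjBj
    set p1 := (c.e n ^ j)⁻¹ * z with hp1
    have hp1M : p1 ∈ c.M (n + 1) := mul_mem (inv_mem (c.epow_mem n j)) hzM
    have hp1kap : c.kap n p1 = 0 := by
      rw [hp1, c.kap_mul n (inv_mem (c.epow_mem n j)) hzM,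
        c.kap_inv n (c.epow_mem n j), c.kap_epow n j, hjcast]
      ring
    have hp1Pc : p1 ∈ c.Pc n := c.mem_Pc_of_kap_zero n hp1M hp1kap
    set t1 := c.rep n p1 with ht1
    have ht1R : t1 ∈ c.Rset n := c.rep_mem_Rset n hp1Pc
    set m1 := t1⁻¹ * p1 with hm1
    have hm1M : m1 ∈ c.M n := by
      have h5 := c.rep_spec n p1
      rw [show m1 = (p1⁻¹ * c.rep n p1)⁻¹ by rw [hm1, ht1]; group]
      exact inv_mem h5
    have hzdecomp : z = c.e n ^ j * t1 * m1 := by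
      rw [hm1, hp1]
      group
    set gt := c.e n ^ j * t1 with hgt
    have hgtM : gt ∈ c.M (n + 1) :=
      mul_mem (c.epow_mem n j) (c.Pc_le n (c.Rset_sub_Pc n ht1R))
    set φw := x * gt * x⁻¹ * gt⁻¹ with hφw
    have hφwPhi : φw ∈ c.Phi n := c.hPhiComm n x hx gt hgtM
    set w := φw * gt with hw
    have hwW : w ∈ W := by
      refine ⟨((j, t1), φw), ⟨⟨hjJ, by simpa using ht1R⟩, hφwPhi⟩, ?_⟩
      rw [hw, hgt]
    have hwx : w * x = x * gt := by
      rw [hw, hφw]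
      group
    have hym : y = (w * x) * m1 := by
      rw [hyz, hzdecomp, hwx, hgt]
      group
    have hwxM : w * x ∈ c.M (n + 1) := by
      rw [hwx]
      exact mul_mem hx hgtM
    have hdowny : c.down n y = c.down n (w * x) * m1 := by
      rw [hym]
      exact ((c.peel n hwxM hm1M).2.2)
    have h2 : c.Nm (c.FN n (c.down n (w * x)) - c.FN n (c.down n x)) ≤ C2 := hC2 w hwW x hx
    set q0 := c.down n (w * x) with hq0
    have hq0M : q0 ∈ c.M n := c.down_mem n hwxM
    have htot : c.Nm (c.FN n (q0 * m1) - c.FN n q0) ≤ C + C2 := by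
      have e1 : c.FN n (q0 * m1) = c.FN n (c.down n y) := by rw [hdowny]
      calc c.Nm (c.FN n (q0 * m1) - c.FN n q0)
          ≤ c.Nm (c.FN n (q0 * m1) - c.FN n (c.down n x))
            + c.Nm (c.FN n (c.down n x) - c.FN n q0) := c.Nm_sub_le _ _ _
        _ ≤ C + C2 := by
            have h3 : c.Nm (c.FN n (q0 * m1) - c.FN n (c.down n x)) ≤ C := by
              rw [e1]
              exact hNmlow
            have h4 : c.Nm (c.FN n (c.down n x) - c.FN n q0) ≤ C2 := by
              rw [show c.FN n (c.down n x) - c.FN n q0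
                = -(c.FN n q0 - c.FN n (c.down n x)) by abel, c.Nm_neg]
              exact h2
            linarith
    have hm1nu : nu (q0⁻¹ * (q0 * m1)) ≤ ε0 :=
      hε0 q0 (q0 * m1) hq0M (mul_mem hq0M hm1M) htot
    rw [show q0⁻¹ * (q0 * m1) = m1 by group] at hm1nu
    rw [hzdecomp]
    calc nu (c.e n ^ j * t1 * m1) ≤ nu (c.e n ^ j) + nu t1 + nu m1 := nu_mul3 hinv _ _ _
      _ ≤ Cg + CR + ε0 := by
          have hg1 : nu (c.e n ^ j) ≤ Cg := by
            refine le_trans (nu_zpow_le hinv _ j) ?_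
            rw [hCg]
            exact mul_le_mul_of_nonneg_right hjBj (nu_nonneg _)
          have ht1nu : nu t1 ≤ CR := hCR t1 (Finset.mem_coe.mpr ht1R)
          linarith

end IBLsec

section Global

variable {G : Type} [Group G] (c : Ctx G)

/-- The level of an element. -/
def lvl (x : G) : ℕ := Nat.find (c.hMexh x)

lemma lvl_mem (x : G) : x ∈ c.M (c.lvl x) := Nat.find_spec (c.hMexh x)

/-- The global digit map. -/
def Fdig (x : G) : c.AA := c.FN (c.lvl x) x

lemma Fdig_eq {n : ℕ} {x : G} (hx : x ∈ c.M n) : c.Fdig x = c.FN n x := by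
  have h1 : c.lvl x ≤ n := Nat.find_min' _ hx
  rw [Fdig]
  exact (c.FN_eq_of_le h1 (c.lvl_mem x)).symm

lemma Nm_eq_zero {a : c.AA} (h : c.Nm a = 0) : a = 0 := by
  apply DFinsupp.ext
  intro k
  have h1 := c.Nm_coord_le a k
  have h2 := c.wq_nonneg k (a k)
  have h3 : c.wq k (a k) = 0 := by linarith
  exact c.wq_eq_zero k h3

lemma Fdig_bij : Function.Bijective c.Fdig := by
  constructor
  · intro x y h
    set N := max (c.lvl x) (c.lvl y) with hN
    have hx : x ∈ c.M N := c.hMmono (le_max_left _ _) (c.lvl_mem x)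
    have hy : y ∈ c.M N := c.hMmono (le_max_right _ _) (c.lvl_mem y)
    refine c.FN_inj N hx hy ?_
    rw [← c.Fdig_eq hx, ← c.Fdig_eq hy, h]
  · intro a
    set N := a.support.sup id + 1 with hNdef
    have ha : ∀ k, N ≤ k → a k = 0 := by
      intro k hk
      by_contra hne
      have h1 : k ∈ a.support := DFinsupp.mem_support_iff.mpr hne
      have h2 : k ≤ a.support.sup id := Finset.le_sup (f := id) h1
      omega
    obtain ⟨x, hx, hFN⟩ := c.FN_surj N a ha
    exact ⟨x, by rw [c.Fdig_eq hx, hFN]⟩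

end Global

section GlobalMetric

variable {G : Type} [Group G] [MetricSpace G] (c : Ctx G)
variable (hinv : ∀ g x y : G, dist (g * x) (g * y) = dist x y)
variable (hprop : ∀ (x : G) (r : ℝ), {y : G | dist x y ≤ r}.Finite)

include hinv hprop in
/-- Global forward estimate. -/
lemma forward : ∀ δ : ℝ, 0 ≤ δ → ∃ ε, 0 ≤ ε ∧ ∀ x y : G, dist x y ≤ δ →
    c.Nm (c.Fdig y - c.Fdig x) ≤ ε := by
  intro δ hδ
  have hBfin : {u : G | nu u ≤ δ}.Finite := hprop 1 δ
  obtain ⟨n, hn⟩ := c.finite_sub_chain hBfin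
  have hFCs : ∀ u : G, ∃ S : Set G, S.Finite ∧ ∀ r ∈ c.M n, r * u * r⁻¹ * u⁻¹ ∈ S :=
    fun u => c.hFC u n
  choose! SF hSFfin hSFmem using hFCs
  set W : Set G := ⋃ u ∈ {u : G | nu u ≤ δ}, (fun s => s * u) '' (SF u) with hWdef
  have hWfin : W.Finite := Set.Finite.biUnion hBfin (fun u _ => ((hSFfin u).image _))
  obtain ⟨ε, hε0, hε⟩ := uniform_bound hWfin
    (fun w C => w ∈ c.M n → ∀ r ∈ c.M n, c.Nm (c.FN n (w * r) - c.FN n r) ≤ C)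
    (fun w C C' hle hP hw r hr => le_trans (hP hw r hr) hle)
    (fun w _ => by
      by_cases hw : w ∈ c.M n
      · obtain ⟨C, h0, hC⟩ := c.IHL n w hw
        exact ⟨C, h0, fun _ => hC⟩
      · exact ⟨0, le_refl 0, fun hmem => absurd hmem hw⟩)
  refine ⟨ε, hε0, fun x y hxy => ?_⟩
  set u := x⁻¹ * y with hu
  have hunu : nu u ≤ δ := by
    rw [hu, ← dist_eq_nu hinv]
    exact hxy
  have huM : u ∈ c.M n := hn hunu
  set N := max n (c.lvl x) with hN
  have hxN : x ∈ c.M N := c.hMmono (le_max_right _ _) (c.lvl_mem x)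
  have hyxu : y = x * u := by rw [hu]; group
  have hyN : y ∈ c.M N := by
    rw [hyxu]
    exact mul_mem hxN (c.hMmono (le_max_left _ _) huM)
  obtain ⟨r, hr, hreq⟩ := c.FN_peel (le_max_left n (c.lvl x)) hxN huM
  set w := (r * u * r⁻¹ * u⁻¹) * u with hwdef
  have hwW : w ∈ W := by
    rw [hWdef]
    refine Set.mem_biUnion hunu ⟨r * u * r⁻¹ * u⁻¹, hSFmem u r hr, rfl⟩
  have hwM : w ∈ c.M n := by
    rw [show w = r * u * r⁻¹ by rw [hwdef]; group]
    exact mul_mem (mul_mem hr huM) (inv_mem hr)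
  have hwr : w * r = r * u := by rw [hwdef]; group
  have hFx : c.Fdig x = c.FN N x := c.Fdig_eq hxN
  have hFy : c.Fdig y = c.FN N y := c.Fdig_eq hyN
  calc c.Nm (c.Fdig y - c.Fdig x) = c.Nm (c.FN n (r * u) - c.FN n r) := by
        rw [hFx, hFy, hyxu, hreq]
    _ = c.Nm (c.FN n (w * r) - c.FN n r) := by rw [hwr]
    _ ≤ ε := hε w hwW hwM r hr

include hinv in
/-- Global backward estimate. -/
lemma backward : ∀ δ : ℝ, 0 ≤ δ → ∃ ε, 0 ≤ ε ∧ ∀ x y : G,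
    c.Nm (c.Fdig y - c.Fdig x) ≤ δ → dist x y ≤ ε := by
  intro δ hδ
  obtain ⟨n, hn⟩ := exists_nat_gt δ
  obtain ⟨ε, hε0, hε⟩ := c.IBL hinv n δ hδ
  refine ⟨ε, hε0, fun x y hxy => ?_⟩
  set N := max n (max (c.lvl x) (c.lvl y)) with hN
  have hxN : x ∈ c.M N := c.hMmono (le_trans (le_max_left _ _) (le_max_right _ _))
    (c.lvl_mem x)
  have hyN : y ∈ c.M N := c.hMmono (le_trans (le_max_right _ _) (le_max_right _ _))
    (c.lvl_mem y)
  have hFx : c.Fdig x = c.FN N x := c.Fdig_eq hxN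
  have hFy : c.Fdig y = c.FN N y := c.Fdig_eq hyN
  rw [hFx, hFy] at hxy
  have hsep : x⁻¹ * y ∈ c.M n := by
    refine c.FN_sep (le_max_left _ _) hxN hyN ?_
    intro k hk
    have hk1 : δ < (k : ℝ) + 1 := by
      have h1 : (n : ℝ) ≤ (k : ℝ) := by exact_mod_cast hk
      linarith
    have h2 : (c.FN N y - c.FN N x) k = 0 := c.Nm_coord_zero hxy hk1
    rw [DFinsupp.sub_apply] at h2
    exact (eq_of_sub_eq_zero h2).symm
  obtain ⟨r, hr, hreq⟩ := c.FN_peel (le_max_left _ _) hxN hsep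
  have hyxu : y = x * (x⁻¹ * y) := by group
  have hNm2 : c.Nm (c.FN n (r * (x⁻¹ * y)) - c.FN n r) ≤ δ := by
    rw [← hreq, ← hyxu]
    exact hxy
  have h3 := hε r (r * (x⁻¹ * y)) hr (mul_mem hr hsep) hNm2
  rw [show r⁻¹ * (r * (x⁻¹ * y)) = x⁻¹ * y by group] at h3
  rw [dist_eq_nu hinv]
  exact h3

end GlobalMetric

end Ctx

/-! ## The locally finite-by-abelian case -/

section CaseLFAFinal

variable {G : Type} [Group G] [MetricSpace G] [Countable G]
variable (hinv : ∀ g x y : G, dist (g * x) (g * y) = dist x y)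
variable (hprop : ∀ (x : G) (r : ℝ), {y : G | dist x y ≤ r}.Finite)

include hinv hprop in
theorem case_locallyFiniteByAbelian (hLFA : LocallyFiniteByAbelian G) :
    ∃ (A : Type) (_ : CommGroup A) (_ : MetricSpace A), Countable A ∧
      (∀ g x y : A, dist (g * x) (g * y) = dist x y) ∧
      (∀ (x : A) (r : ℝ), {y : A | dist x y ≤ r}.Finite) ∧
      ∃ F : G → A, Function.Bijective F ∧
        (∀ δ : ℝ, 0 ≤ δ → ∃ ε : ℝ, 0 ≤ ε ∧
          ∀ x y : G, dist x y ≤ δ → dist (F x) (F y) ≤ ε) ∧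
        (∀ δ : ℝ, 0 ≤ δ → ∃ ε : ℝ, 0 ≤ ε ∧
          ∀ x y : G, dist (F x) (F y) ≤ δ → dist x y ≤ ε) := by
  classical
  obtain ⟨c⟩ := Ctx.exists_ctx hLFA
  set A := Multiplicative c.AA with hA
  set dA : A → A → ℝ := fun a b => c.Nm (Multiplicative.toAdd a - Multiplicative.toAdd b)
    with hdA
  have dA_self : ∀ a : A, dA a a = 0 := fun a => by
    simp only [dA, sub_self, c.Nm_zero]
  have dA_comm : ∀ a b : A, dA a b = dA b a := fun a b => by
    simp only [dA]
    rw [show Multiplicative.toAdd a - Multiplicative.toAdd b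
      = -(Multiplicative.toAdd b - Multiplicative.toAdd a) by abel, c.Nm_neg]
  have dA_tri : ∀ a b d : A, dA a d ≤ dA a b + dA b d := fun a b d => by
    simp only [dA]
    exact c.Nm_sub_le _ _ _
  have dA_eq : ∀ a b : A, dA a b = 0 → a = b := by
    intro a b h
    have h1 : Multiplicative.toAdd a - Multiplicative.toAdd b = 0 := c.Nm_eq_zero h
    have h2 : Multiplicative.toAdd a = Multiplicative.toAdd b := by
      have := sub_eq_zero.mp h1
      exact this
    exact Multiplicative.toAdd.injective h2
  let MS : MetricSpace A :=
    { dist := dA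
      dist_self := dA_self
      dist_comm := dA_comm
      dist_triangle := dA_tri
      eq_of_dist_eq_zero := fun {a b} h => dA_eq a b h }
  set F : G → A := fun x => Multiplicative.ofAdd (c.Fdig x) with hF
  have hFbij : Function.Bijective F :=
    Function.Bijective.comp (Multiplicative.ofAdd.bijective) (c.Fdig_bij)
  haveI hcount : Countable A := Countable.of_equiv G (Equiv.ofBijective F hFbij)
  refine ⟨A, inferInstance, MS, hcount, ?_, ?_, F, hFbij, ?_, ?_⟩
  · -- invariance
    intro g x y
    show dA (g * x) (g * y) = dA x y
    simp only [dA]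
    congr 1
    show (Multiplicative.toAdd g + Multiplicative.toAdd x)
      - (Multiplicative.toAdd g + Multiplicative.toAdd y) = _
    abel
  · -- properness
    intro x r
    have hsub : {y : A | dA x y ≤ r} ⊆
        (fun b : A => Multiplicative.toAdd x - Multiplicative.toAdd b) ⁻¹'
          {a : c.AA | c.Nm a ≤ r} := fun b hb => hb
    refine Set.Finite.subset (Set.Finite.preimage ?_ (c.Nm_ball_finite r)) hsub
    intro a _ b _ hab
    have : Multiplicative.toAdd a = Multiplicative.toAdd b := by
      have := sub_right_injective hab
      exact this
    exact Multiplicative.toAdd.injective this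
  · -- forward
    intro δ hδ
    obtain ⟨ε, hε0, hε⟩ := c.forward hinv hprop δ hδ
    refine ⟨ε, hε0, fun x y hxy => ?_⟩
    show dA (F x) (F y) ≤ ε
    simp only [dA, hF]
    rw [show Multiplicative.toAdd (Multiplicative.ofAdd (c.Fdig x))
      - Multiplicative.toAdd (Multiplicative.ofAdd (c.Fdig y))
      = -(c.Fdig y - c.Fdig x) by simp, c.Nm_neg]
    exact hε x y hxy
  · -- backward
    intro δ hδ
    obtain ⟨ε, hε0, hε⟩ := c.backward hinv δ hδ
    refine ⟨ε, hε0, fun x y hxy => ?_⟩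
    refine hε x y ?_
    replace hxy : dA (F x) (F y) ≤ δ := hxy
    simp only [dA, hF] at hxy
    rw [show Multiplicative.toAdd (Multiplicative.ofAdd (c.Fdig x))
      - Multiplicative.toAdd (Multiplicative.ofAdd (c.Fdig y))
      = -(c.Fdig y - c.Fdig x) by simp, c.Nm_neg] at hxy
    exact hxy

end CaseLFAFinal

end BCE

/-- Every countable group with a proper left-invariant metric that is abelian-by-finite
or locally finite-by-abelian is bijectively coarsely equivalent to some countable
abelian group endowed with a proper left-invariant metric. -/
theorem bijectively_coarsely_equiv_abelian_of_abelianByFinite_or_locallyFiniteByAbelian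
    (G : Type) [Group G] [Countable G] [MetricSpace G]
    (hinv : ∀ g x y : G, dist (g * x) (g * y) = dist x y)
    (hprop : ∀ (x : G) (r : ℝ), {y : G | dist x y ≤ r}.Finite)
    (hG : AbelianByFinite G ∨ LocallyFiniteByAbelian G) :
    ∃ (A : Type) (_ : CommGroup A) (_ : MetricSpace A), Countable A ∧
      (∀ g x y : A, dist (g * x) (g * y) = dist x y) ∧
      (∀ (x : A) (r : ℝ), {y : A | dist x y ≤ r}.Finite) ∧
      ∃ F : G → A, Function.Bijective F ∧
        (∀ δ : ℝ, 0 ≤ δ → ∃ ε : ℝ, 0 ≤ ε ∧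
          ∀ x y : G, dist x y ≤ δ → dist (F x) (F y) ≤ ε) ∧
        (∀ δ : ℝ, 0 ≤ δ → ∃ ε : ℝ, 0 ≤ ε ∧
          ∀ x y : G, dist (F x) (F y) ≤ δ → dist x y ≤ ε) := by
  rcases hG with h | h
  · exact case_abelianByFinite hinv hprop h
  · exact case_locallyFiniteByAbelian hinv hprop h
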